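/- arXiv:1605.07759 — 7 statements merged into one kernel-verified Lean document; each statement's English description precedes it below -/
import Mathlib

section
/- Let D ⊆ ℂ be open and let f : D → ℂ be holomorphic with f′(z) ≠ 0 for every z ∈ D. Define U : D → ℝ by U(z) = log(|f′(z)| / (1 + |f(z)|²)). Then U is smooth on D and satisfies the Liouville equation ΔU(z) = −4·exp(2U(z)) for all z ∈ D, where Δ = ∂²/∂x₁² + ∂²/∂x₂² is the Laplacian with respect to the two real coordinates z = x₁ + i x₂. -/
open Complex Filter

/-- The Laplacian `Δ = ∂²/∂x₁² + ∂²/∂x₂²` of a real-valued function on `ℂ ≃ ℝ²`,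
where `z = x₁ + i x₂`. -/
noncomputable def lap (U : ℂ → ℝ) (z : ℂ) : ℝ :=
  fderiv ℝ (fun w => fderiv ℝ U w 1) z 1 +
    fderiv ℝ (fun w => fderiv ℝ U w Complex.I) z Complex.I

lemma fderiv_apply_mul (g : ℂ → ℂ) (w v : ℂ) : (fderiv ℂ g w) v = v * deriv g w := by
  conv_lhs => rw [show v = v • (1:ℂ) by simp, map_smul]
  rw [fderiv_apply_one_eq_deriv]
  simp [smul_eq_mul]

lemma hasFDerivAt_re {g : ℂ → ℂ} {w : ℂ} (hg : DifferentiableAt ℂ g w) :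
    HasFDerivAt (fun x => (g x).re)
      (Complex.reCLM.comp ((fderiv ℂ g w).restrictScalars ℝ)) w :=
  (Complex.reCLM.hasFDerivAt).comp w (hg.hasFDerivAt.restrictScalars ℝ)

lemma hasFDerivAt_im {g : ℂ → ℂ} {w : ℂ} (hg : DifferentiableAt ℂ g w) :
    HasFDerivAt (fun x => (g x).im)
      (Complex.imCLM.comp ((fderiv ℂ g w).restrictScalars ℝ)) w :=
  (Complex.imCLM.hasFDerivAt).comp w (hg.hasFDerivAt.restrictScalars ℝ)

lemma fderiv_re_apply {g : ℂ → ℂ} {w : ℂ} (hg : DifferentiableAt ℂ g w) (v : ℂ) :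
    fderiv ℝ (fun x => (g x).re) w v = (v * deriv g w).re := by
  rw [(hasFDerivAt_re hg).fderiv]
  simp [fderiv_apply_mul]

lemma fderiv_im_apply {g : ℂ → ℂ} {w : ℂ} (hg : DifferentiableAt ℂ g w) (v : ℂ) :
    fderiv ℝ (fun x => (g x).im) w v = (v * deriv g w).im := by
  rw [(hasFDerivAt_im hg).fderiv]
  simp [fderiv_apply_mul]

lemma lap_congr {u v : ℂ → ℝ} {z : ℂ} (h : u =ᶠ[nhds z] v) : lap u z = lap v z := by
  have h1 : fderiv ℝ u =ᶠ[nhds z] fderiv ℝ v := h.fderiv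
  have h2 : (fun w => fderiv ℝ u w 1) =ᶠ[nhds z] (fun w => fderiv ℝ v w 1) :=
    h1.mono fun w hw => by show fderiv ℝ u w _ = fderiv ℝ v w _; rw [hw]
  have h3 : (fun w => fderiv ℝ u w Complex.I) =ᶠ[nhds z] (fun w => fderiv ℝ v w Complex.I) :=
    h1.mono fun w hw => by show fderiv ℝ u w _ = fderiv ℝ v w _; rw [hw]
  unfold lap
  rw [h2.fderiv_eq, h3.fderiv_eq]

lemma deriv_differentiableOn {h : ℂ → ℂ} {s : Set ℂ} (hs : IsOpen s)
    (hh : DifferentiableOn ℂ h s) : DifferentiableOn ℂ (deriv h) s :=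
  ((hh.analyticOnNhd hs).deriv).differentiableOn

lemma lap_re_holo {h : ℂ → ℂ} {s : Set ℂ} (hs : IsOpen s)
    (hh : DifferentiableOn ℂ h s) {z : ℂ} (hz : z ∈ s) :
    lap (fun x => (h x).re) z = 0 := by
  have hd : ∀ w ∈ s, DifferentiableAt ℂ h w := fun w hw => hh.differentiableAt (hs.mem_nhds hw)
  have hd' : ∀ w ∈ s, DifferentiableAt ℂ (deriv h) w := fun w hw =>
    (deriv_differentiableOn hs hh w hw).differentiableAt (hs.mem_nhds hw)
  have e1 : (fun w => fderiv ℝ (fun x => (h x).re) w 1) =ᶠ[nhds z]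
      (fun w => (deriv h w).re) := by
    filter_upwards [hs.mem_nhds hz] with w hw
    rw [fderiv_re_apply (hd w hw)]; simp
  have e2 : (fun w => fderiv ℝ (fun x => (h x).re) w Complex.I) =ᶠ[nhds z]
      (fun w => -(deriv h w).im) := by
    filter_upwards [hs.mem_nhds hz] with w hw
    rw [fderiv_re_apply (hd w hw)]; simp [Complex.mul_re]
  unfold lap
  rw [e1.fderiv_eq, e2.fderiv_eq]
  have hdz := hd' z hz
  rw [fderiv_re_apply hdz]
  have : fderiv ℝ (fun w => -(deriv h w).im) z Complex.I
      = -(fderiv ℝ (fun w => (deriv h w).im) z Complex.I) := by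
    rw [fderiv_fun_neg]; simp
  rw [this, fderiv_im_apply hdz]
  simp [Complex.mul_re, Complex.mul_im]

lemma lap_add_const (v : ℂ → ℝ) (c : ℝ) (z : ℂ) :
    lap (fun w => v w + c) z = lap v z := by
  have h : ∀ w, fderiv ℝ (fun x => v x + c) w = fderiv ℝ v w := fun w => fderiv_add_const c
  unfold lap
  simp only [h]

lemma lap_log_abs_holo {g : ℂ → ℂ} {s : Set ℂ} (hs : IsOpen s)
    (hg : DifferentiableOn ℂ g s) {z : ℂ} (hz : z ∈ s) (hgz : g z ≠ 0) :
    lap (fun w => Real.log ‖g w‖) z = 0 := by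
  set t : Set ℂ := s ∩ (fun w => g w / g z) ⁻¹' Complex.slitPlane with ht
  have hcont : ContinuousOn (fun w => g w / g z) s :=
    (hg.continuousOn.div_const _)
  have htopen : IsOpen t := hcont.isOpen_inter_preimage hs Complex.isOpen_slitPlane
  have hzt : z ∈ t := by
    refine ⟨hz, ?_⟩
    simp [Set.mem_preimage, div_self hgz, Complex.one_mem_slitPlane]
  have hdiffh : DifferentiableOn ℂ (fun w => Complex.log (g w / g z)) t := by
    intro w hw
    exact ((Complex.differentiableAt_log hw.2).comp w
      (((hg.differentiableAt (hs.mem_nhds hw.1)).div_const _))).differentiableWithinAt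
  have heq : (fun w => Real.log ‖g w‖) =ᶠ[nhds z]
      (fun w => (Complex.log (g w / g z)).re + Real.log ‖g z‖) := by
    filter_upwards [htopen.mem_nhds hzt] with w hw
    have hw0 : g w / g z ≠ 0 := Complex.slitPlane_ne_zero hw.2
    have hgw : g w ≠ 0 := fun h => hw0 (by simp [h])
    rw [Complex.log_re, norm_div, Real.log_div (by simpa using hgw) (by simpa using hgz)]
    ring
  rw [lap_congr heq, lap_add_const, lap_re_holo htopen hdiffh hzt]

lemma one_add_sq_pos (a b : ℝ) : 0 < 1 + (a * a + b * b) := by nlinarith [sq_nonneg a, sq_nonneg b]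

lemma fderiv_V_apply {f : ℂ → ℂ} {w : ℂ} (hfw : DifferentiableAt ℂ f w) (v : ℂ) :
    fderiv ℝ (fun x => Real.log (1 + ((f x).re * (f x).re + (f x).im * (f x).im))) w v
      = (2 * ((f w).re * (v * deriv f w).re) + 2 * ((f w).im * (v * deriv f w).im)) /
        (1 + ((f w).re * (f w).re + (f w).im * (f w).im)) := by
  have hre := hasFDerivAt_re hfw
  have him := hasFDerivAt_im hfw
  have hN := ((hre.fun_mul hre).fun_add (him.fun_mul him)).const_add 1
  have hpos := one_add_sq_pos (f w).re (f w).im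
  have hV := hN.log hpos.ne'
  rw [hV.fderiv]
  simp [ContinuousLinearMap.smul_apply, ContinuousLinearMap.add_apply,
    ContinuousLinearMap.comp_apply, fderiv_apply_mul, smul_eq_mul]
  ring

lemma lap_V {f : ℂ → ℂ} {s : Set ℂ} (hs : IsOpen s) (hf : DifferentiableOn ℂ f s)
    {z : ℂ} (hz : z ∈ s) :
    lap (fun w => Real.log (1 + ((f w).re * (f w).re + (f w).im * (f w).im))) z
      = 4 * Complex.normSq (deriv f z) / (1 + Complex.normSq (f z))^2 := by
  have hdf : ∀ w ∈ s, DifferentiableAt ℂ f w :=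
    fun w hw => hf.differentiableAt (hs.mem_nhds hw)
  have hdf' : ∀ w ∈ s, DifferentiableAt ℂ (deriv f) w := fun w hw =>
    (deriv_differentiableOn hs hf w hw).differentiableAt (hs.mem_nhds hw)
  have e1 : (fun w => fderiv ℝ
        (fun x => Real.log (1 + ((f x).re * (f x).re + (f x).im * (f x).im))) w 1)
      =ᶠ[nhds z] (fun w => (2 * ((f w).re * (deriv f w).re) + 2 * ((f w).im * (deriv f w).im)) *
        (1 + ((f w).re * (f w).re + (f w).im * (f w).im))⁻¹) := by
    filter_upwards [hs.mem_nhds hz] with w hw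
    rw [fderiv_V_apply (hdf w hw), div_eq_mul_inv]
    simp
  have e2 : (fun w => fderiv ℝ
        (fun x => Real.log (1 + ((f x).re * (f x).re + (f x).im * (f x).im))) w Complex.I)
      =ᶠ[nhds z] (fun w => (2 * ((f w).re * -(deriv f w).im) + 2 * ((f w).im * (deriv f w).re)) *
        (1 + ((f w).re * (f w).re + (f w).im * (f w).im))⁻¹) := by
    filter_upwards [hs.mem_nhds hz] with w hw
    rw [fderiv_V_apply (hdf w hw), div_eq_mul_inv]
    rw [Complex.mul_re, Complex.mul_im]
    simp
  unfold lap
  rw [e1.fderiv_eq, e2.fderiv_eq]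
  have hre := hasFDerivAt_re (hdf z hz)
  have him := hasFDerivAt_im (hdf z hz)
  have hre' := hasFDerivAt_re (hdf' z hz)
  have him' := hasFDerivAt_im (hdf' z hz)
  have hpos := one_add_sq_pos (f z).re (f z).im
  have hden := ((hre.fun_mul hre).fun_add (him.fun_mul him)).const_add 1
  have hinv := (hasFDerivAt_inv hpos.ne').comp z hden
  have hA1 := (((hre.fun_mul hre').const_mul 2).fun_add ((him.fun_mul him').const_mul 2)).fun_mul hinv
  have hA2 := (((hre.fun_mul him'.fun_neg).const_mul 2).fun_add ((him.fun_mul hre').const_mul 2)).fun_mul hinv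
  simp only [Function.comp_def] at hA1 hA2
  rw [hA1.fderiv, hA2.fderiv]
  simp only [ContinuousLinearMap.smul_apply, ContinuousLinearMap.add_apply,
    ContinuousLinearMap.sub_apply, ContinuousLinearMap.comp_apply,
    ContinuousLinearMap.coe_restrictScalars', ContinuousLinearMap.neg_apply,
    ContinuousLinearMap.smulRight_apply, ContinuousLinearMap.one_apply,
      ContinuousLinearMap.toSpanSingleton_apply,
    Complex.reCLM_apply, Complex.imCLM_apply, fderiv_apply_mul, smul_eq_mul,
    Complex.mul_re, Complex.mul_im, Complex.one_re, Complex.one_im,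
    Complex.I_re, Complex.I_im, Complex.normSq_apply]
  set p := (f z).re
  set q := (f z).im
  set b1 := (deriv f z).re
  set b2 := (deriv f z).im
  set c1 := (deriv (deriv f) z).re
  set c2 := (deriv (deriv f) z).im
  have hne : (1 + (p * p + q * q)) ≠ 0 := hpos.ne'
  field_simp
  ring

lemma lap_sub_of_contDiffOn {u v : ℂ → ℝ} {s : Set ℂ} (hs : IsOpen s)
    (hu : ContDiffOn ℝ (⊤ : ℕ∞) u s) (hv : ContDiffOn ℝ (⊤ : ℕ∞) v s) {z : ℂ} (hz : z ∈ s) :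
    lap (fun w => u w - v w) z = lap u z - lap v z := by
  have hu1 : ∀ w ∈ s, DifferentiableAt ℝ u w := fun w hw =>
    (hu.differentiableOn (by simp)).differentiableAt (hs.mem_nhds hw)
  have hv1 : ∀ w ∈ s, DifferentiableAt ℝ v w := fun w hw =>
    (hv.differentiableOn (by simp)).differentiableAt (hs.mem_nhds hw)
  have hu2 : ContDiffOn ℝ (⊤ : ℕ∞) (fun w => fderiv ℝ u w) s :=
    hu.fderiv_of_isOpen hs (by exact_mod_cast le_top)
  have hv2 : ContDiffOn ℝ (⊤ : ℕ∞) (fun w => fderiv ℝ v w) s :=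
    hv.fderiv_of_isOpen hs (by exact_mod_cast le_top)
  have hdu : ∀ c : ℂ, DifferentiableAt ℝ (fun w => fderiv ℝ u w c) z := fun c =>
    (((hu2.clm_apply contDiffOn_const).differentiableOn (by simp)).differentiableAt
      (hs.mem_nhds hz))
  have hdv : ∀ c : ℂ, DifferentiableAt ℝ (fun w => fderiv ℝ v w c) z := fun c =>
    (((hv2.clm_apply contDiffOn_const).differentiableOn (by simp)).differentiableAt
      (hs.mem_nhds hz))
  have e : ∀ c : ℂ, (fun w => fderiv ℝ (fun x => u x - v x) w c)
      =ᶠ[nhds z] (fun w => fderiv ℝ u w c - fderiv ℝ v w c) := by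
    intro c
    filter_upwards [hs.mem_nhds hz] with w hw
    rw [fderiv_fun_sub (hu1 w hw) (hv1 w hw)]
    simp
  unfold lap
  rw [(e 1).fderiv_eq, (e Complex.I).fderiv_eq,
    fderiv_fun_sub (hdu 1) (hdv 1), fderiv_fun_sub (hdu Complex.I) (hdv Complex.I)]
  simp
  ring

lemma contDiffOn_L1 {f : ℂ → ℂ} {D : Set ℂ} (hD : IsOpen D) (hf : DifferentiableOn ℂ f D)
    (hf' : ∀ z ∈ D, deriv f z ≠ 0) :
    ContDiffOn ℝ (⊤ : ℕ∞) (fun w => Real.log (‖deriv f w‖)) D := by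
  intro w hw
  have hg : AnalyticAt ℂ (deriv f) w := (hf.analyticOnNhd hD).deriv w hw
  have h1 : ContDiffAt ℝ (⊤ : ℕ∞) (deriv f) w := hg.contDiffAt.restrict_scalars ℝ
  have h2 : ContDiffAt ℝ (⊤ : ℕ∞) (fun x => ‖deriv f x‖) w := h1.norm ℂ (hf' w hw)
  have h3 : ContDiffAt ℝ (⊤ : ℕ∞) (fun x => Real.log ‖deriv f x‖) w :=
    h2.log (by simpa using hf' w hw)
  have : (fun w => Real.log (‖deriv f w‖)) =
      (fun x => Real.log ‖deriv f x‖) := by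
    rfl
  rw [this]
  exact h3.contDiffWithinAt

lemma contDiffOn_L2 {f : ℂ → ℂ} {D : Set ℂ} (hD : IsOpen D) (hf : DifferentiableOn ℂ f D) :
    ContDiffOn ℝ (⊤ : ℕ∞)
      (fun w => Real.log (1 + ((f w).re * (f w).re + (f w).im * (f w).im))) D := by
  intro w hw
  have h1 : ContDiffAt ℝ (⊤ : ℕ∞) f w :=
    (((hf.analyticOnNhd hD) w hw).contDiffAt).restrict_scalars ℝ
  have hre : ContDiffAt ℝ (⊤ : ℕ∞) (fun x => (f x).re) w :=
    Complex.reCLM.contDiff.contDiffAt.comp w h1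
  have him : ContDiffAt ℝ (⊤ : ℕ∞) (fun x => (f x).im) w :=
    Complex.imCLM.contDiff.contDiffAt.comp w h1
  have hN : ContDiffAt ℝ (⊤ : ℕ∞)
      (fun x => 1 + ((f x).re * (f x).re + (f x).im * (f x).im)) w :=
    contDiffAt_const.add ((hre.mul hre).add (him.mul him))
  exact (hN.log (one_add_sq_pos _ _).ne').contDiffWithinAt

/-- If `f` is holomorphic on an open set `D ⊆ ℂ` with nowhere vanishing
derivative, then `U(z) = log(|f′(z)| / (1 + |f(z)|²))` is smooth on `D` and satisfies
the Liouville equation `ΔU = −4 e^{2U}` on `D`. -/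
theorem liouville_local_solution (D : Set ℂ) (hD : IsOpen D) (f : ℂ → ℂ)
    (hf : DifferentiableOn ℂ f D) (hf' : ∀ z ∈ D, deriv f z ≠ 0)
    (U : ℂ → ℝ)
    (hU : ∀ z ∈ D, U z = Real.log (‖deriv f z‖ / (1 + ‖f z‖ ^ 2))) :
    ContDiffOn ℝ (⊤ : ℕ∞) U D ∧
      ∀ z ∈ D, lap U z = -4 * Real.exp (2 * U z) := by
  set W : ℂ → ℝ := fun w => Real.log (‖deriv f w‖) -
    Real.log (1 + ((f w).re * (f w).re + (f w).im * (f w).im)) with hWdef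
  have habs : ∀ w : ℂ, (‖f w‖) ^ 2 = (f w).re * (f w).re + (f w).im * (f w).im := by
    intro w; rw [Complex.sq_norm, Complex.normSq_apply]
  have hposd : ∀ w : ℂ, (0:ℝ) < 1 + ‖f w‖ ^ 2 := by
    intro w; rw [habs]; exact one_add_sq_pos _ _
  have hUW : ∀ w ∈ D, U w = W w := by
    intro w hw
    rw [hU w hw, hWdef]
    have ha : ‖deriv f w‖ ≠ 0 := by simpa using hf' w hw
    rw [Real.log_div ha (hposd w).ne', habs]
  -- smoothness
  have hW : ContDiffOn ℝ (⊤ : ℕ∞) W D :=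
    (contDiffOn_L1 hD hf hf').sub (contDiffOn_L2 hD hf)
  have hUs : ContDiffOn ℝ (⊤ : ℕ∞) U D := hW.congr hUW
  refine ⟨hUs, fun z hz => ?_⟩
  -- the equation
  have heq : U =ᶠ[nhds z] W := by
    filter_upwards [hD.mem_nhds hz] with w hw using hUW w hw
  rw [lap_congr heq, hWdef]
  have hsplit := lap_sub_of_contDiffOn hD (contDiffOn_L1 hD hf hf') (contDiffOn_L2 hD hf) hz
  rw [hsplit, lap_log_abs_holo hD (deriv_differentiableOn hD hf) hz (hf' z hz),
    lap_V hD hf hz]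
  -- final algebra
  rw [hU z hz]
  have hr : (0:ℝ) < ‖deriv f z‖ / (1 + ‖f z‖ ^ 2) := by
    apply div_pos _ (hposd z)
    simpa [AbsoluteValue.pos_iff] using hf' z hz
  rw [show (2:ℝ) * Real.log (‖deriv f z‖ / (1 + ‖f z‖ ^ 2))
      = Real.log ((‖deriv f z‖ / (1 + ‖f z‖ ^ 2)) ^ 2) by
    rw [Real.log_pow]; push_cast; ring]
  rw [Real.exp_log (by positivity)]
  rw [div_pow, Complex.sq_norm, habs]
  simp only [Complex.normSq_apply]
  field_simp
  ring
end

section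
/- Let D ⊆ ℂ be open and let U : D → ℝ be a smooth function satisfying ∂_z ∂_{z̄} U = −exp(2U) on D. Then the function W := ∂_z² U − (∂_z U)² satisfies ∂_{z̄} W = 0 on D; in particular W is holomorphic on D. -/
open Complex Filter

/-- The Wirtinger derivative `∂_z = ½(∂/∂x₁ − i ∂/∂x₂)` on `ℂ ≃ ℝ²`, `z = x₁ + i x₂`. -/
noncomputable def wz (f : ℂ → ℂ) (z : ℂ) : ℂ :=
  (fderiv ℝ f z 1 - Complex.I * fderiv ℝ f z Complex.I) / 2

/-- The Wirtinger derivative `∂_{z̄} = ½(∂/∂x₁ + i ∂/∂x₂)` on `ℂ ≃ ℝ²`, `z = x₁ + i x₂`. -/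
noncomputable def wzbar (f : ℂ → ℂ) (z : ℂ) : ℂ :=
  (fderiv ℝ f z 1 + Complex.I * fderiv ℝ f z Complex.I) / 2

open Topology

section helpers
variable {D : Set ℂ} {f g : ℂ → ℂ} {z v w : ℂ}

lemma dd_contDiffOn (hD : IsOpen D) (hf : ContDiffOn ℝ (⊤ : ℕ∞) f D) (v : ℂ) :
    ContDiffOn ℝ (⊤ : ℕ∞) (fun z => fderiv ℝ f z v) D := by
  have h1 : ContDiffOn ℝ (⊤ : ℕ∞) (fderiv ℝ f) D :=
    ((contDiffOn_infty_iff_fderiv_of_isOpen hD).1 hf).2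
  exact (ContinuousLinearMap.apply ℝ ℂ v).contDiff.comp_contDiffOn h1

lemma diffAt_of_smoothOn (hD : IsOpen D) (hf : ContDiffOn ℝ (⊤ : ℕ∞) f D) (hz : z ∈ D) :
    DifferentiableAt ℝ f z :=
  (hf.contDiffAt (hD.mem_nhds hz)).differentiableAt (by simp)

lemma dd_clairaut (hD : IsOpen D) (hf : ContDiffOn ℝ (⊤ : ℕ∞) f D) (hz : z ∈ D) (v w : ℂ) :
    fderiv ℝ (fun y => fderiv ℝ f y w) z v = fderiv ℝ (fun y => fderiv ℝ f y v) z w := by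
  have h1 : ContDiffOn ℝ (⊤ : ℕ∞) (fderiv ℝ f) D :=
    ((contDiffOn_infty_iff_fderiv_of_isOpen hD).1 hf).2
  have hdf : DifferentiableAt ℝ (fderiv ℝ f) z :=
    (h1.contDiffAt (hD.mem_nhds hz)).differentiableAt (by simp)
  set f'' := fderiv ℝ (fderiv ℝ f) z with hf''
  have hev : ∀ᶠ y in 𝓝 z, HasFDerivAt f (fderiv ℝ f y) y := by
    filter_upwards [hD.mem_nhds hz] with y hy using
      (diffAt_of_smoothOn hD hf hy).hasFDerivAt
  have hsym := second_derivative_symmetric_of_eventually hev hdf.hasFDerivAt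
  have key : ∀ a b : ℂ, fderiv ℝ (fun y => fderiv ℝ f y b) z a = f'' a b := by
    intro a b
    have : HasFDerivAt (fun y => fderiv ℝ f y b)
        ((ContinuousLinearMap.apply ℝ ℂ b).comp f'') z :=
      (ContinuousLinearMap.apply ℝ ℂ b).hasFDerivAt.comp z hdf.hasFDerivAt
    rw [this.fderiv]; rfl
  rw [key, key, hsym]

lemma wz_contDiffOn (hD : IsOpen D) (hf : ContDiffOn ℝ (⊤ : ℕ∞) f D) :
    ContDiffOn ℝ (⊤ : ℕ∞) (wz f) D := by
  unfold wz
  exact (((dd_contDiffOn hD hf 1).sub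
    ((dd_contDiffOn hD hf Complex.I).const_smul Complex.I)).div_const 2).congr
    (fun x _ => by simp [smul_eq_mul])

lemma wzbar_contDiffOn (hD : IsOpen D) (hf : ContDiffOn ℝ (⊤ : ℕ∞) f D) :
    ContDiffOn ℝ (⊤ : ℕ∞) (wzbar f) D := by
  unfold wzbar
  exact (((dd_contDiffOn hD hf 1).add
    ((dd_contDiffOn hD hf Complex.I).const_smul Complex.I)).div_const 2).congr
    (fun x _ => by simp [smul_eq_mul])

lemma wz_congr (h : f =ᶠ[𝓝 z] g) : wz f z = wz g z := by
  unfold wz; rw [h.fderiv_eq]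

lemma wzbar_sub (hf : DifferentiableAt ℝ f z) (hg : DifferentiableAt ℝ g z) :
    wzbar (fun y => f y - g y) z = wzbar f z - wzbar g z := by
  unfold wzbar
  rw [fderiv_fun_sub hf hg]
  simp only [ContinuousLinearMap.sub_apply]
  ring

lemma wzbar_mul (hf : DifferentiableAt ℝ f z) (hg : DifferentiableAt ℝ g z) :
    wzbar (fun y => f y * g y) z = f z * wzbar g z + g z * wzbar f z := by
  unfold wzbar
  rw [fderiv_fun_mul hf hg]
  simp only [ContinuousLinearMap.add_apply, ContinuousLinearMap.smul_apply, smul_eq_mul]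
  ring

lemma dd_exp (hg : DifferentiableAt ℝ g z) (v : ℂ) :
    fderiv ℝ (fun y => Complex.exp (g y)) z v = Complex.exp (g z) * fderiv ℝ g z v := by
  have he : HasFDerivAt Complex.exp
      (((1 : ℂ →L[ℂ] ℂ).smulRight (Complex.exp (g z))).restrictScalars ℝ) (g z) :=
    (Complex.hasDerivAt_exp (g z)).hasFDerivAt.restrictScalars ℝ
  have h2 := (he.comp z hg.hasFDerivAt).fderiv
  rw [show (fun y => Complex.exp (g y)) = Complex.exp ∘ g from rfl, h2]
  simp [smul_eq_mul, mul_comm]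

lemma wz_exp_comp (hg : DifferentiableAt ℝ g z) :
    wz (fun y => Complex.exp (g y)) z = Complex.exp (g z) * wz g z := by
  unfold wz
  rw [dd_exp hg, dd_exp hg]
  ring

lemma wz_const_mul (hf : DifferentiableAt ℝ f z) (c : ℂ) :
    wz (fun y => c * f y) z = c * wz f z := by
  unfold wz
  rw [fderiv_const_mul hf c]
  simp only [ContinuousLinearMap.smul_apply, smul_eq_mul]
  ring

lemma wz_neg : wz (fun y => -f y) z = -wz f z := by
  unfold wz
  rw [fderiv_fun_neg]
  simp only [ContinuousLinearMap.neg_apply]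
  ring

lemma dd_div_two {A : ℂ → ℂ} (hA : DifferentiableAt ℝ A z) (v : ℂ) :
    fderiv ℝ (fun y => A y / 2) z v = fderiv ℝ A z v / 2 := by
  simp only [div_eq_mul_inv]
  rw [fderiv_mul_const hA]
  simp [smul_eq_mul, mul_comm]

lemma dd_sub {A B : ℂ → ℂ} (hA : DifferentiableAt ℝ A z) (hB : DifferentiableAt ℝ B z) (v : ℂ) :
    fderiv ℝ (fun y => A y - B y) z v = fderiv ℝ A z v - fderiv ℝ B z v := by
  rw [fderiv_fun_sub hA hB]; rfl

lemma dd_add {A B : ℂ → ℂ} (hA : DifferentiableAt ℝ A z) (hB : DifferentiableAt ℝ B z) (v : ℂ) :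
    fderiv ℝ (fun y => A y + B y) z v = fderiv ℝ A z v + fderiv ℝ B z v := by
  rw [fderiv_fun_add hA hB]; rfl

lemma dd_const_mul {A : ℂ → ℂ} (hA : DifferentiableAt ℝ A z) (c v : ℂ) :
    fderiv ℝ (fun y => c * A y) z v = c * fderiv ℝ A z v := by
  rw [fderiv_const_mul hA c]
  simp [smul_eq_mul]

lemma fderiv_wz_apply (hD : IsOpen D) (hf : ContDiffOn ℝ (⊤ : ℕ∞) f D) (hz : z ∈ D)
    (v : ℂ) :
    fderiv ℝ (wz f) z v =
      (fderiv ℝ (fun y => fderiv ℝ f y 1) z v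
        - Complex.I * fderiv ℝ (fun y => fderiv ℝ f y Complex.I) z v) / 2 := by
  have d1 : DifferentiableAt ℝ (fun y => fderiv ℝ f y 1) z :=
    diffAt_of_smoothOn hD (dd_contDiffOn hD hf 1) hz
  have dI : DifferentiableAt ℝ (fun y => fderiv ℝ f y Complex.I) z :=
    diffAt_of_smoothOn hD (dd_contDiffOn hD hf Complex.I) hz
  rw [show wz f = (fun y => (fderiv ℝ f y 1 - Complex.I * fderiv ℝ f y Complex.I) / 2) from rfl,
    dd_div_two (d1.fun_sub (dI.const_mul Complex.I)),
    dd_sub d1 (dI.const_mul Complex.I), dd_const_mul dI Complex.I]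

lemma fderiv_wzbar_apply (hD : IsOpen D) (hf : ContDiffOn ℝ (⊤ : ℕ∞) f D) (hz : z ∈ D)
    (v : ℂ) :
    fderiv ℝ (wzbar f) z v =
      (fderiv ℝ (fun y => fderiv ℝ f y 1) z v
        + Complex.I * fderiv ℝ (fun y => fderiv ℝ f y Complex.I) z v) / 2 := by
  have d1 : DifferentiableAt ℝ (fun y => fderiv ℝ f y 1) z :=
    diffAt_of_smoothOn hD (dd_contDiffOn hD hf 1) hz
  have dI : DifferentiableAt ℝ (fun y => fderiv ℝ f y Complex.I) z :=
    diffAt_of_smoothOn hD (dd_contDiffOn hD hf Complex.I) hz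
  rw [show wzbar f = (fun y => (fderiv ℝ f y 1 + Complex.I * fderiv ℝ f y Complex.I) / 2) from
    rfl, dd_div_two (d1.fun_add (dI.const_mul Complex.I)),
    dd_add d1 (dI.const_mul Complex.I), dd_const_mul dI Complex.I]

lemma wzbar_wz_comm (hD : IsOpen D) (hf : ContDiffOn ℝ (⊤ : ℕ∞) f D) (hz : z ∈ D) :
    wzbar (wz f) z = wz (wzbar f) z := by
  have hcl := dd_clairaut hD hf hz 1 Complex.I
  rw [show wzbar (wz f) z =
      (fderiv ℝ (wz f) z 1 + Complex.I * fderiv ℝ (wz f) z Complex.I) / 2 from rfl,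
    show wz (wzbar f) z =
      (fderiv ℝ (wzbar f) z 1 - Complex.I * fderiv ℝ (wzbar f) z Complex.I) / 2 from rfl,
    fderiv_wz_apply hD hf hz 1, fderiv_wz_apply hD hf hz Complex.I,
    fderiv_wzbar_apply hD hf hz 1, fderiv_wzbar_apply hD hf hz Complex.I, hcl]
  ring

end helpers

/-- If `U` is a smooth real solution of `∂_z ∂_{z̄} U = −e^{2U}` on an open
set `D ⊆ ℂ`, then the W-invariant `W = ∂_z² U − (∂_z U)²` satisfies `∂_{z̄} W = 0` on `D`;
in particular `W` is holomorphic on `D`. -/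
theorem liouville_w_invariant_holomorphic (D : Set ℂ) (hD : IsOpen D) (U : ℂ → ℝ)
    (hU : ContDiffOn ℝ (⊤ : ℕ∞) U D)
    (heq : ∀ z ∈ D, wz (wzbar (fun w => (U w : ℂ))) z = -Complex.exp (2 * (U z : ℂ))) :
    (∀ z ∈ D,
      wzbar (fun w => wz (wz (fun x => (U x : ℂ))) w - (wz (fun x => (U x : ℂ)) w) ^ 2) z = 0) ∧
    DifferentiableOn ℂ
      (fun w => wz (wz (fun x => (U x : ℂ))) w - (wz (fun x => (U x : ℂ)) w) ^ 2) D := by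
  set u : ℂ → ℂ := fun w => (U w : ℂ) with hu_def
  have hu : ContDiffOn ℝ (⊤ : ℕ∞) u D :=
    Complex.ofRealCLM.contDiff.comp_contDiffOn hU
  have ha : ContDiffOn ℝ (⊤ : ℕ∞) (wz u) D := wz_contDiffOn hD hu
  have hb : ContDiffOn ℝ (⊤ : ℕ∞) (wz (wz u)) D := wz_contDiffOn hD ha
  have hkey : ∀ w ∈ D, wzbar (wz u) w = -Complex.exp (2 * u w) := fun w hw => by
    rw [wzbar_wz_comm hD hu hw]; exact heq w hw
  have main : ∀ z ∈ D, wzbar (fun w => wz (wz u) w - (wz u w) ^ 2) z = 0 := by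
    intro z hz
    have hda : DifferentiableAt ℝ (wz u) z := diffAt_of_smoothOn hD ha hz
    have hdb : DifferentiableAt ℝ (wz (wz u)) z := diffAt_of_smoothOn hD hb hz
    have hdu : DifferentiableAt ℝ u z := diffAt_of_smoothOn hD hu hz
    have e : (fun w => wz (wz u) w - wz u w ^ 2) = (fun w => wz (wz u) w - wz u w * wz u w) := by
      funext w; rw [sq]
    rw [e, wzbar_sub hdb (hda.fun_mul hda), wzbar_mul hda hda]
    have h1 : wzbar (wz (wz u)) z = wz (wzbar (wz u)) z := wzbar_wz_comm hD ha hz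
    have h2 : wzbar (wz u) =ᶠ[𝓝 z] (fun w => -Complex.exp (2 * u w)) :=
      Filter.eventuallyEq_of_mem (hD.mem_nhds hz) hkey
    have h3 : wz (wzbar (wz u)) z = wz (fun w => -Complex.exp (2 * u w)) z := wz_congr h2
    have h4 : wz (fun w => -Complex.exp (2 * u w)) z
        = -(Complex.exp (2 * u z) * (2 * wz u z)) := by
      rw [wz_neg, wz_exp_comp (hdu.const_mul 2), wz_const_mul hdu 2]
    rw [h1, h3, h4, hkey z hz]
    ring
  refine ⟨main, ?_⟩
  intro z hz
  have hW : ContDiffOn ℝ (⊤ : ℕ∞) (fun w => wz (wz u) w - (wz u w) ^ 2) D :=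
    hb.sub (ha.pow 2)
  have hWd : DifferentiableAt ℝ (fun w => wz (wz u) w - (wz u w) ^ 2) z :=
    diffAt_of_smoothOn hD hW hz
  set L := fderiv ℝ (fun w => wz (wz u) w - (wz u w) ^ 2) z with hL
  have h0 : (L 1 + Complex.I * L Complex.I) / 2 = 0 := main z hz
  have h1 : L 1 + Complex.I * L Complex.I = 0 := by
    field_simp at h0; simpa using h0
  have hLI : L Complex.I = Complex.I * L 1 := by
    linear_combination (-Complex.I) * h1 + L Complex.I * Complex.I_sq
  have hLv : ∀ v : ℂ, L v = L 1 * v := by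
    intro v
    have hsplit : v = (v.re : ℝ) • (1 : ℂ) + (v.im : ℝ) • Complex.I := by
      simp only [Complex.real_smul, mul_one]
      exact (Complex.re_add_im v).symm
    conv_lhs => rw [hsplit]
    rw [map_add, map_smul, map_smul, hLI]
    simp only [Complex.real_smul, smul_eq_mul]
    linear_combination L 1 * (Complex.re_add_im v)
  have hC : DifferentiableAt ℂ (fun w => wz (wz u) w - (wz u w) ^ 2) z := by
    refine (differentiableAt_iff_restrictScalars ℝ hWd).2
      ⟨L 1 • (1 : ℂ →L[ℂ] ℂ), ?_⟩
    refine ContinuousLinearMap.ext fun v => ?_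
    simp [hLv v, smul_eq_mul, mul_comm]
    exact ((hLv v).trans (mul_comm _ _)).symm
  exact hC.differentiableWithinAt
end

section
/- Let m, n ≥ 1 and let e₁, …, e_n be strictly lower triangular complex m×m matrices, and let μ₁, …, μ_n > 0 be real numbers. For a finite sequence s = (i₁, …, i_k) with entries in {1, …, n} set φ(s) = μ_{i₁} + ⋯ + μ_{i_k}, p(s) = ∏_{j=1}^{k} (μ_{i_j} + μ_{i_{j+1}} + ⋯ + μ_{i_k}), and e_s = e_{i_k} ⋯ e_{i₂} e_{i₁} (with φ = 0, p = 1, e_s = Id for the empty sequence). Define Φ : ℂ∖ℝ_{≤0} → M_m(ℂ) by Φ(z) = Σ_s z^{φ(s)} e_s / p(s), the sum ranging over all sequences of length < m. Then Φ is differentiable with Φ′(z) = Φ(z) · (Σ_{i=1}^n z^{μ_i − 1} e_i) for every z ∈ ℂ∖ℝ_{≤0}, and Φ(z) → Id as z → 0 within ℂ∖ℝ_{≤0}. -/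
open Complex Filter

variable {n m : ℕ}

/-- `φ(s) = μ_{i₁} + ⋯ + μ_{i_k}` for a finite sequence `s = (i₁, …, i_k)`. -/
def phiSeq (μ : Fin n → ℝ) (s : List (Fin n)) : ℝ := (s.map μ).sum

/-- `p(s) = ∏_{j=1}^{k} (μ_{i_j} + μ_{i_{j+1}} + ⋯ + μ_{i_k})`, the Kostant denominator. -/
def pSeq (μ : Fin n → ℝ) : List (Fin n) → ℝ
  | [] => 1
  | i :: t => ((i :: t).map μ).sum * pSeq μ t

/-- `e_s = e_{i_k} ⋯ e_{i₂} e_{i₁}` for `s = (i₁, …, i_k)` (identity for the empty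
sequence). -/
noncomputable def eSeq (e : Fin n → Matrix (Fin m) (Fin m) ℂ) : List (Fin n) → Matrix (Fin m) (Fin m) ℂ
  | [] => 1
  | i :: t => eSeq e t * e i

/-- The Kostant series `Φ(z) = Σ_s z^{φ(s)} e_s / p(s)`, summed over all sequences of
length `< m` (all longer products of strictly lower triangular matrices vanish). -/
noncomputable def PhiK (μ : Fin n → ℝ) (e : Fin n → Matrix (Fin m) (Fin m) ℂ) (z : ℂ) :
    Matrix (Fin m) (Fin m) ℂ :=
  ∑ k ∈ Finset.range m, ∑ t : Fin k → Fin n,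
    ((z ^ ((phiSeq μ (List.ofFn t) : ℝ) : ℂ)) / ((pSeq μ (List.ofFn t) : ℝ) : ℂ)) •
      eSeq e (List.ofFn t)

lemma phiSeq_nonneg (μ : Fin n → ℝ) (hμ : ∀ i, 0 < μ i) (l : List (Fin n)) :
    0 ≤ phiSeq μ l := by
  induction l with
  | nil => simp [phiSeq]
  | cons i t ih =>
    simp only [phiSeq, List.map_cons, List.sum_cons] at ih ⊢
    exact add_nonneg (hμ i).le ih

lemma phiSeq_cons (μ : Fin n → ℝ) (i : Fin n) (t : List (Fin n)) :
    phiSeq μ (i :: t) = μ i + phiSeq μ t := by simp [phiSeq]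

lemma phiSeq_pos (μ : Fin n → ℝ) (hμ : ∀ i, 0 < μ i) (i : Fin n) (t : List (Fin n)) :
    0 < phiSeq μ (i :: t) := by
  rw [phiSeq_cons]
  exact add_pos_of_pos_of_nonneg (hμ i) (phiSeq_nonneg μ hμ t)

lemma pSeq_cons (μ : Fin n → ℝ) (i : Fin n) (t : List (Fin n)) :
    pSeq μ (i :: t) = phiSeq μ (i :: t) * pSeq μ t := rfl

lemma pSeq_pos (μ : Fin n → ℝ) (hμ : ∀ i, 0 < μ i) : ∀ l : List (Fin n), 0 < pSeq μ l
  | [] => one_pos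
  | i :: t => by
    rw [pSeq_cons]
    exact mul_pos (phiSeq_pos μ hμ i t) (pSeq_pos μ hμ t)

lemma eSeq_apply_eq_zero (e : Fin n → Matrix (Fin m) (Fin m) ℂ)
    (he : ∀ i, ∀ j k : Fin m, (j : ℕ) ≤ (k : ℕ) → e i j k = 0) :
    ∀ (l : List (Fin n)) (j k : Fin m), (j : ℕ) < (k : ℕ) + l.length → eSeq e l j k = 0 := by
  intro l
  induction l with
  | nil =>
    intro j k h
    simp only [List.length_nil, Nat.add_zero] at h
    simp [eSeq, Matrix.one_apply, (Fin.lt_iff_val_lt_val.2 h).ne]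
  | cons i t ih =>
    intro j k h
    simp only [eSeq, Matrix.mul_apply]
    apply Finset.sum_eq_zero
    intro l' _
    rcases le_or_gt (l' : ℕ) (k : ℕ) with hl | hl
    · rw [he i l' k hl, mul_zero]
    · rw [ih j l' (by simp only [List.length_cons] at h; omega), zero_mul]

lemma eSeq_eq_zero_of_length (e : Fin n → Matrix (Fin m) (Fin m) ℂ)
    (he : ∀ i, ∀ j k : Fin m, (j : ℕ) ≤ (k : ℕ) → e i j k = 0)
    (l : List (Fin n)) (hl : m ≤ l.length) : eSeq e l = 0 := by
  ext j k
  rw [Matrix.zero_apply]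
  exact eSeq_apply_eq_zero e he l j k (by have := j.isLt; omega)

/-- The sum of derivative terms. -/
noncomputable def dTermK (μ : Fin n → ℝ) (e : Fin n → Matrix (Fin m) (Fin m) ℂ) (z : ℂ)
    (k : ℕ) : Matrix (Fin m) (Fin m) ℂ :=
  ∑ t : Fin k → Fin n,
    ((((phiSeq μ (List.ofFn t) : ℝ) : ℂ) * z ^ (((phiSeq μ (List.ofFn t) : ℝ) : ℂ) - 1)) /
      ((pSeq μ (List.ofFn t) : ℝ) : ℂ)) • eSeq e (List.ofFn t)

lemma kostant_key (hm : 1 ≤ m) (e : Fin n → Matrix (Fin m) (Fin m) ℂ)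
    (he : ∀ i, ∀ j k : Fin m, (j : ℕ) ≤ (k : ℕ) → e i j k = 0)
    (μ : Fin n → ℝ) (hμ : ∀ i, 0 < μ i) {z : ℂ} (hz : z ∈ Complex.slitPlane) :
    ∑ k ∈ Finset.range m, dTermK μ e z k
      = PhiK μ e z * ∑ i : Fin n, (z ^ (((μ i - 1 : ℝ)) : ℂ)) • e i := by
  have hz0 : z ≠ 0 := slitPlane_ne_zero hz
  -- the product expands to a shifted sum of derivative terms
  have hstep : ∀ k : ℕ,
      (∑ t : Fin k → Fin n,
        ((z ^ ((phiSeq μ (List.ofFn t) : ℝ) : ℂ)) / ((pSeq μ (List.ofFn t) : ℝ) : ℂ)) •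
          eSeq e (List.ofFn t)) * (∑ i : Fin n, (z ^ (((μ i - 1 : ℝ)) : ℂ)) • e i)
        = dTermK μ e z (k + 1) := by
    intro k
    rw [Finset.sum_mul]
    have : ∀ t : Fin k → Fin n,
        (((z ^ ((phiSeq μ (List.ofFn t) : ℝ) : ℂ)) / ((pSeq μ (List.ofFn t) : ℝ) : ℂ)) •
          eSeq e (List.ofFn t)) * (∑ i : Fin n, (z ^ (((μ i - 1 : ℝ)) : ℂ)) • e i)
        = ∑ i : Fin n,
            ((((phiSeq μ (i :: List.ofFn t) : ℝ) : ℂ) *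
                z ^ (((phiSeq μ (i :: List.ofFn t) : ℝ) : ℂ) - 1)) /
              ((pSeq μ (i :: List.ofFn t) : ℝ) : ℂ)) • eSeq e (i :: List.ofFn t) := by
      intro t
      rw [Finset.mul_sum]
      refine Finset.sum_congr rfl fun i _ => ?_
      rw [Matrix.smul_mul, Matrix.mul_smul, smul_smul]
      congr 1
      · -- scalar identity
        have hp0 : ((pSeq μ (List.ofFn t) : ℝ) : ℂ) ≠ 0 := by
          exact_mod_cast (pSeq_pos μ hμ (List.ofFn t)).ne'
        have hφ0 : ((μ i : ℝ) : ℂ) + ((phiSeq μ (List.ofFn t) : ℝ) : ℂ) ≠ 0 := by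
          have := (phiSeq_pos μ hμ i (List.ofFn t)).ne'
          rw [phiSeq_cons] at this
          exact_mod_cast this
        have h1 : (((phiSeq μ (i :: List.ofFn t) : ℝ)) : ℂ) - 1
            = ((phiSeq μ (List.ofFn t) : ℝ) : ℂ) + ((μ i - 1 : ℝ) : ℂ) := by
          rw [phiSeq_cons]; push_cast; ring
        rw [h1, Complex.cpow_add _ _ hz0, pSeq_cons, phiSeq_cons]
        push_cast
        field_simp
    rw [Finset.sum_congr rfl fun t _ => this t]
    -- now reindex over Fin (k+1) → Fin n
    rw [dTermK, ← Fintype.sum_prod_type']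
    exact Fintype.sum_equiv ((Equiv.prodComm _ _).trans (Fin.consEquiv fun _ => Fin n)) _ _
      (by
        rintro ⟨t, i⟩
        simp [Fin.consEquiv, List.ofFn_succ])
  have hd0 : dTermK μ e z 0 = 0 := by
    simp [dTermK, phiSeq, List.ofFn_zero]
  have hdm : dTermK μ e z m = 0 := by
    rw [dTermK]
    apply Finset.sum_eq_zero
    intro t _
    rw [eSeq_eq_zero_of_length e he _ (by simp), smul_zero]
  obtain ⟨m', rfl⟩ : ∃ m', m = m' + 1 := ⟨m - 1, by omega⟩
  rw [PhiK, Finset.sum_mul, Finset.sum_range_succ' (fun k => dTermK μ e z k) m', hd0, add_zero,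
    Finset.sum_range_succ, Finset.sum_congr rfl fun k _ => hstep k, hstep m', hdm, add_zero]

/-- For strictly lower triangular `e₁, …, e_n ∈ M_m(ℂ)` and reals
`μ_i > 0`, the Kostant series `Φ(z) = Σ_s z^{φ(s)} e_s / p(s)` satisfies
`Φ′(z) = Φ(z) · (Σ_i z^{μ_i − 1} e_i)` on `ℂ∖ℝ_{≤0}` (entrywise), and `Φ(z) → Id`
as `z → 0` within `ℂ∖ℝ_{≤0}`. -/
theorem kostant_series_solves_ode (hn : 1 ≤ n) (hm : 1 ≤ m)
    (e : Fin n → Matrix (Fin m) (Fin m) ℂ)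
    (he : ∀ i, ∀ j k : Fin m, (j : ℕ) ≤ (k : ℕ) → e i j k = 0)
    (μ : Fin n → ℝ) (hμ : ∀ i, 0 < μ i) :
    (∀ z ∈ Complex.slitPlane, ∀ j k : Fin m,
      HasDerivAt (fun w => PhiK μ e w j k)
        ((PhiK μ e z * ∑ i : Fin n, (z ^ (((μ i - 1 : ℝ)) : ℂ)) • e i) j k) z) ∧
    (∀ j k : Fin m,
      Tendsto (fun w => PhiK μ e w j k) (nhdsWithin 0 Complex.slitPlane)
        (nhds ((1 : Matrix (Fin m) (Fin m) ℂ) j k))) := by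
  constructor
  · intro z hz j k
    rw [← kostant_key hm e he μ hμ hz]
    have : (∑ k' ∈ Finset.range m, dTermK μ e z k') j k
        = ∑ k' ∈ Finset.range m, ∑ t : Fin k' → Fin n,
          ((((phiSeq μ (List.ofFn t) : ℝ) : ℂ) *
              z ^ (((phiSeq μ (List.ofFn t) : ℝ) : ℂ) - 1)) /
            ((pSeq μ (List.ofFn t) : ℝ) : ℂ)) * eSeq e (List.ofFn t) j k := by
      simp [dTermK, Matrix.sum_apply]
    rw [this]
    have heq : (fun w => PhiK μ e w j k)
        = fun w => ∑ k' ∈ Finset.range m, ∑ t : Fin k' → Fin n,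
            ((w ^ ((phiSeq μ (List.ofFn t) : ℝ) : ℂ)) / ((pSeq μ (List.ofFn t) : ℝ) : ℂ)) *
              eSeq e (List.ofFn t) j k := by
      funext w
      simp [PhiK, Matrix.sum_apply]
    rw [heq]
    apply HasDerivAt.fun_sum
    intro k' _
    apply HasDerivAt.fun_sum
    intro t _
    exact (((Complex.hasStrictDerivAt_cpow_const hz).hasDerivAt.div_const _).mul_const _)
  · intro j k
    have heq : ∀ w : ℂ, PhiK μ e w j k
        = ∑ k' ∈ Finset.range m, ∑ t : Fin k' → Fin n,
            ((w ^ ((phiSeq μ (List.ofFn t) : ℝ) : ℂ)) / ((pSeq μ (List.ofFn t) : ℝ) : ℂ)) *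
              eSeq e (List.ofFn t) j k := by
      intro w
      simp [PhiK, Matrix.sum_apply]
    have h0 : PhiK μ e 0 = 1 := by
      obtain ⟨m', rfl⟩ : ∃ m', m = m' + 1 := ⟨m - 1, by omega⟩
      rw [PhiK, Finset.sum_range_succ']
      have hz : ∀ k' ∈ Finset.range m',
          (∑ t : Fin (k' + 1) → Fin n,
            (((0 : ℂ) ^ ((phiSeq μ (List.ofFn t) : ℝ) : ℂ)) /
              ((pSeq μ (List.ofFn t) : ℝ) : ℂ)) • eSeq e (List.ofFn t)) = 0 := by
        intro k' _
        apply Finset.sum_eq_zero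
        intro t _
        have hφ : (0 : ℝ) < phiSeq μ (List.ofFn t) := by
          rw [List.ofFn_succ]
          exact phiSeq_pos μ hμ _ _
        rw [Complex.zero_cpow (by exact_mod_cast hφ.ne'), zero_div, zero_smul]
      rw [Finset.sum_congr rfl hz]
      simp [phiSeq, pSeq, eSeq, List.ofFn_zero]
    have : Tendsto (fun w => PhiK μ e w j k) (nhdsWithin 0 Complex.slitPlane)
        (nhds (PhiK μ e 0 j k)) := by
      simp only [heq]
      apply tendsto_finset_sum
      intro k' _
      apply tendsto_finset_sum
      intro t _
      apply Tendsto.mul_const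
      apply Tendsto.div_const
      rcases eq_or_lt_of_le (phiSeq_nonneg μ hμ (List.ofFn t)) with hφ | hφ
      · simp only [← hφ, Complex.ofReal_zero, Complex.cpow_zero]
        exact tendsto_const_nhds
      · have hc : ContinuousAt (fun x : ℂ × ℂ => x.1 ^ x.2)
            (0, ((phiSeq μ (List.ofFn t) : ℝ) : ℂ)) :=
          Complex.continuousAt_cpow_zero_of_re_pos (by simpa using hφ)
        have h2 : Tendsto (fun w : ℂ => w ^ ((phiSeq μ (List.ofFn t) : ℝ) : ℂ)) (nhds 0)
            (nhds ((0 : ℂ) ^ ((phiSeq μ (List.ofFn t) : ℝ) : ℂ))) := by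
          simpa [Function.comp_def] using
            hc.tendsto.comp ((continuous_id.prodMk continuous_const).tendsto (0 : ℂ))
        exact h2.mono_left nhdsWithin_le_nhds
    rwa [h0] at this
end

section
/- Let n ≥ 1 and let γ₁, …, γ_n > −1 be real numbers with μ_i = γ_i + 1. Define Φ : ℂ∖ℝ_{≤0} → M_{n+1}(ℂ) by Φ(z)_{ii} = 1, Φ(z)_{ij} = 0 for i < j, and Φ(z)_{ij} = z^{μ_j + μ_{j+1} + ⋯ + μ_{i−1}} / ∏_{l=j}^{i−1} (μ_l + μ_{l+1} + ⋯ + μ_{i−1}) for i > j. Let ζ(z) ∈ M_{n+1}(ℂ) have entries ζ(z)_{i+1,i} = z^{γ_i} for 1 ≤ i ≤ n and all other entries 0. Then Φ′(z) = Φ(z) ζ(z) for every z ∈ ℂ∖ℝ_{≤0}, and Φ(z) → Id as z → 0 within ℂ∖ℝ_{≤0}. -/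
open Complex Filter

lemma tendsto_cpow_zero_aux {s : ℝ} (hs : 0 < s) :
    Tendsto (fun w : ℂ => w ^ (s : ℂ)) (nhdsWithin 0 Complex.slitPlane) (nhds 0) := by
  rw [tendsto_zero_iff_norm_tendsto_zero]
  have h1 : Tendsto (fun w : ℂ => ‖w‖ ^ s)
      (nhdsWithin 0 Complex.slitPlane) (nhds 0) := by
    have : Tendsto (fun w : ℂ => ‖w‖) (nhdsWithin 0 Complex.slitPlane) (nhds 0) := by
      simpa using (continuous_norm.tendsto (0 : ℂ)).mono_left nhdsWithin_le_nhds
    simpa [Real.zero_rpow hs.ne'] using this.rpow_const (Or.inr hs.le)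
  refine h1.congr fun w => ?_
  simp [Complex.norm_cpow_real]


/-- The explicit lower unitriangular matrix `Φ(z)` of the `A_n` Toda system, with
`Φ(z)_{ij} = z^{μ_j + ⋯ + μ_{i−1}} / ∏_{l=j}^{i−1} (μ_l + ⋯ + μ_{i−1})` below the
diagonal (indices here are 0-based, `μ` is indexed by `0, …, n−1`). -/
noncomputable def PhiA (n : ℕ) (μ : ℕ → ℝ) (z : ℂ) : Matrix (Fin (n + 1)) (Fin (n + 1)) ℂ :=
  Matrix.of fun i j : Fin (n + 1) =>
    if (i : ℕ) = (j : ℕ) then 1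
    else if (i : ℕ) < (j : ℕ) then 0
    else z ^ (((∑ l ∈ Finset.Ico (j : ℕ) (i : ℕ), μ l : ℝ)) : ℂ) /
      ∏ l ∈ Finset.Ico (j : ℕ) (i : ℕ), ((∑ k ∈ Finset.Ico l (i : ℕ), μ k : ℝ) : ℂ)

/-- The matrix `ζ(z) = Σ_{i=1}^n z^{γ_i} e_{−α_i}`, i.e. `ζ(z)_{i+1,i} = z^{γ_i}`
(0-based indices, `γ` indexed by `0, …, n−1`). -/
noncomputable def zetaA (n : ℕ) (γ : ℕ → ℝ) (z : ℂ) : Matrix (Fin (n + 1)) (Fin (n + 1)) ℂ :=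
  Matrix.of fun i j : Fin (n + 1) =>
    if (i : ℕ) = (j : ℕ) + 1 then z ^ ((γ (j : ℕ) : ℝ) : ℂ) else 0

/-- For `γ_i > −1`, `μ_i = γ_i + 1`, the explicit lower unitriangular
matrix `Φ` satisfies `Φ′(z) = Φ(z) ζ(z)` on `ℂ∖ℝ_{≤0}` (entrywise) and `Φ(z) → Id` as
`z → 0` within `ℂ∖ℝ_{≤0}`, where `ζ(z)` has entries `ζ(z)_{i+1,i} = z^{γ_i}`. -/
theorem phiA_solves_ode (n : ℕ) (hn : 1 ≤ n) (γ : ℕ → ℝ) (hγ : ∀ i < n, -1 < γ i)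
    (μ : ℕ → ℝ) (hμ : ∀ i, μ i = γ i + 1) :
    (∀ z ∈ Complex.slitPlane, ∀ i j : Fin (n + 1),
      HasDerivAt (fun w => PhiA n μ w i j) ((PhiA n μ z * zetaA n γ z) i j) z) ∧
    (∀ i j : Fin (n + 1),
      Tendsto (fun w => PhiA n μ w i j) (nhdsWithin 0 Complex.slitPlane)
        (nhds ((1 : Matrix (Fin (n + 1)) (Fin (n + 1)) ℂ) i j))) := by
  have hμpos : ∀ i < n, 0 < μ i := fun i hi => by rw [hμ]; linarith [hγ i hi]
  have hSpos : ∀ (i : Fin (n+1)) (a : ℕ), a < (i : ℕ) →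
      0 < ∑ k ∈ Finset.Ico a (i : ℕ), μ k := by
    intro i a ha
    apply Finset.sum_pos
    · intro k hk
      have hk2 := (Finset.mem_Ico.mp hk).2
      have := i.isLt
      exact hμpos k (by omega)
    · exact ⟨a, Finset.mem_Ico.mpr ⟨le_refl a, ha⟩⟩
  constructor
  · intro z hz i j
    have hz0 : z ≠ 0 := slitPlane_ne_zero hz
    have hrhs : (PhiA n μ z * zetaA n γ z) i j =
        if h : (j : ℕ) + 1 < n + 1 then
          PhiA n μ z i ⟨(j : ℕ) + 1, h⟩ * z ^ ((γ (j : ℕ) : ℝ) : ℂ) else 0 := by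
      rw [Matrix.mul_apply]
      split_ifs with h
      · rw [Finset.sum_eq_single (⟨(j : ℕ) + 1, h⟩ : Fin (n+1))]
        · simp [zetaA]
        · intro b _ hb
          have hb' : (b : ℕ) ≠ (j : ℕ) + 1 := by
            intro hc; exact hb (Fin.ext hc)
          simp [zetaA, hb']
        · simp
      · apply Finset.sum_eq_zero
        intro k _
        have hk := k.isLt
        have : (k : ℕ) ≠ (j : ℕ) + 1 := by omega
        simp [zetaA, this]
    rcases le_or_gt (i : ℕ) (j : ℕ) with hij | hij
    · have hconst : (fun w => PhiA n μ w i j) =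
          fun _ : ℂ => (if (i : ℕ) = (j : ℕ) then (1 : ℂ) else 0) := by
        funext w
        simp only [PhiA, Matrix.of_apply]
        split_ifs with h1 h2
        · rfl
        · rfl
        · omega
      have hzero : (PhiA n μ z * zetaA n γ z) i j = 0 := by
        rw [hrhs]
        split_ifs with h
        · have h1 : (i : ℕ) ≠ (j : ℕ) + 1 := by omega
          have h2 : (i : ℕ) < (j : ℕ) + 1 := by omega
          have hzero' : PhiA n μ z i ⟨(j : ℕ) + 1, h⟩ = 0 := by
            simp only [PhiA, Matrix.of_apply, Fin.val_mk]
            rw [if_neg h1, if_pos h2]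
          rw [hzero', zero_mul]
        · rfl
      rw [hconst, hzero]
      exact hasDerivAt_const _ _
    · -- i > j
      set S : ℝ := ∑ l ∈ Finset.Ico (j : ℕ) (i : ℕ), μ l with hSdef
      set C : ℂ := ∏ l ∈ Finset.Ico (j : ℕ) (i : ℕ),
        ((∑ k ∈ Finset.Ico l (i : ℕ), μ k : ℝ) : ℂ) with hCdef
      have hfun : (fun w => PhiA n μ w i j) = fun w : ℂ => w ^ ((S : ℝ) : ℂ) / C := by
        funext w
        simp only [PhiA, Matrix.of_apply]
        rw [if_neg hij.ne', if_neg (by omega)]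
      have hD : HasDerivAt (fun w : ℂ => w ^ ((S : ℝ) : ℂ) / C)
          (((S : ℝ) : ℂ) * z ^ (((S : ℝ) : ℂ) - 1) / C) z :=
        ((Complex.hasStrictDerivAt_cpow_const hz).hasDerivAt).div_const C
      rw [hfun]
      have hgoal : ((S : ℝ) : ℂ) * z ^ (((S : ℝ) : ℂ) - 1) / C =
          (PhiA n μ z * zetaA n γ z) i j := by
        rw [hrhs]
        have hin : (i : ℕ) ≤ n := Nat.lt_succ_iff.mp i.isLt
        have hj1 : (j : ℕ) + 1 < n + 1 := by omega
        rw [dif_pos hj1]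
        have hjn : (j : ℕ) < n := by omega
        rcases eq_or_lt_of_le (Nat.succ_le_of_lt hij) with hcase | hcase
        · -- j + 1 = i
          have hci : (i : ℕ) = (j : ℕ) + 1 := by omega
          have hIco : Finset.Ico (j : ℕ) (i : ℕ) = {(j : ℕ)} := by
            rw [hci]; exact Nat.Ico_succ_singleton _
          have hS : S = μ (j : ℕ) := by rw [hSdef, hIco, Finset.sum_singleton]
          have hC : C = ((μ (j : ℕ) : ℝ) : ℂ) := by
            rw [hCdef, hIco, Finset.prod_singleton, hIco, Finset.sum_singleton]
          have hμne : ((μ (j : ℕ) : ℝ) : ℂ) ≠ 0 := by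
            exact_mod_cast (hμpos _ hjn).ne'
          have hidx : PhiA n μ z i ⟨(j : ℕ) + 1, hj1⟩ = 1 := by
            simp only [PhiA, Matrix.of_apply, Fin.val_mk]
            rw [if_pos hci]
          rw [hidx, one_mul, hS, hC, mul_div_cancel_left₀ _ hμne]
          have hec : ((μ (j : ℕ) : ℝ) : ℂ) - 1 = ((γ (j : ℕ) : ℝ) : ℂ) := by
            rw [hμ]; push_cast; ring
          rw [hec]
        · -- j + 1 < i
          set S' : ℝ := ∑ l ∈ Finset.Ico ((j : ℕ) + 1) (i : ℕ), μ l with hS'def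
          set C' : ℂ := ∏ l ∈ Finset.Ico ((j : ℕ) + 1) (i : ℕ),
            ((∑ k ∈ Finset.Ico l (i : ℕ), μ k : ℝ) : ℂ) with hC'def
          have hidx : PhiA n μ z i ⟨(j : ℕ) + 1, hj1⟩ = z ^ ((S' : ℝ) : ℂ) / C' := by
            simp only [PhiA, Matrix.of_apply]
            rw [if_neg (by omega), if_neg (by omega)]
          have hSsplit : S = μ (j : ℕ) + S' := Finset.sum_eq_sum_Ico_succ_bot hij μ
          have hCsplit : C = ((S : ℝ) : ℂ) * C' := by
            rw [hCdef, Finset.prod_eq_prod_Ico_succ_bot hij]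
          have hSne : ((S : ℝ) : ℂ) ≠ 0 := by
            exact_mod_cast (hSpos i _ hij).ne'
          rw [hidx, hCsplit, mul_div_mul_left _ _ hSne]
          have hexp : ((S : ℝ) : ℂ) - 1 = ((S' : ℝ) : ℂ) + ((γ (j : ℕ) : ℝ) : ℂ) := by
            rw [hSsplit, hμ]; push_cast; ring
          rw [hexp, Complex.cpow_add _ _ hz0, mul_div_right_comm]
      rw [← hgoal]
      exact hD
  · intro i j
    rcases le_or_gt (i : ℕ) (j : ℕ) with hij | hij
    · have hconst : (fun w => PhiA n μ w i j) =
          fun _ : ℂ => (if (i : ℕ) = (j : ℕ) then (1 : ℂ) else 0) := by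
        funext w
        simp only [PhiA, Matrix.of_apply]
        split_ifs with h1 h2
        · rfl
        · rfl
        · omega
      rw [hconst]
      have hone : (1 : Matrix (Fin (n + 1)) (Fin (n + 1)) ℂ) i j =
          if (i : ℕ) = (j : ℕ) then (1 : ℂ) else 0 := by
        simp [Matrix.one_apply, Fin.ext_iff]
      rw [hone]
      exact tendsto_const_nhds
    · have hfun : (fun w => PhiA n μ w i j) = fun w : ℂ =>
          w ^ (((∑ l ∈ Finset.Ico (j : ℕ) (i : ℕ), μ l : ℝ)) : ℂ) /
            ∏ l ∈ Finset.Ico (j : ℕ) (i : ℕ),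
              ((∑ k ∈ Finset.Ico l (i : ℕ), μ k : ℝ) : ℂ) := by
        funext w
        simp only [PhiA, Matrix.of_apply]
        rw [if_neg hij.ne', if_neg (by omega)]
      rw [hfun]
      have hone : (1 : Matrix (Fin (n + 1)) (Fin (n + 1)) ℂ) i j = 0 := by
        simp [Matrix.one_apply, Fin.ext_iff, hij.ne']
      rw [hone]
      have := (tendsto_cpow_zero_aux (hSpos i _ hij)).div_const
        (∏ l ∈ Finset.Ico (j : ℕ) (i : ℕ), ((∑ k ∈ Finset.Ico l (i : ℕ), μ k : ℝ) : ℂ))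
      simpa using this
end

section
/- Let γ > −1, μ = γ + 1, λ > 0 and c ∈ ℂ. Define u : ℂ∖ℝ_{≤0} → ℝ by u(z) = 2γ log|z| − 2 log( λ² + λ^{−2} | z^{μ}/μ + c |² ), using the principal power z^{μ}. Then u is smooth and satisfies Δu(z) + 8 exp(u(z)) = 0 for every z ∈ ℂ∖ℝ_{≤0}. -/
set_option maxHeartbeats 2000000

open Complex Filter Topology

/-- For `γ > −1`, `μ = γ + 1`, `λ > 0`, `c ∈ ℂ`, the function
`u(z) = 2γ log|z| − 2 log(λ² + λ^{−2} |z^μ/μ + c|²)` (principal power `z^μ`) is smooth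
on `ℂ∖ℝ_{≤0}` and satisfies `Δu + 8 e^u = 0` there. -/
theorem liouville_explicit_solution (γ : ℝ) (hγ : -1 < γ) (μ : ℝ) (hμ : μ = γ + 1)
    (lam : ℝ) (hlam : 0 < lam) (c : ℂ) (u : ℂ → ℝ)
    (hu : ∀ z : ℂ, u z = 2 * γ * Real.log ‖z‖ -
      2 * Real.log (lam ^ 2 + lam⁻¹ ^ 2 * ‖z ^ ((μ : ℝ) : ℂ) / (μ : ℂ) + c‖ ^ 2)) :
    ContDiffOn ℝ (⊤ : ℕ∞) u Complex.slitPlane ∧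
      ∀ z ∈ Complex.slitPlane, lap u z + 8 * Real.exp (u z) = 0 := by
  have hμpos : (0:ℝ) < μ := by linarith
  have hμc : (μ:ℂ) ≠ 0 := Complex.ofReal_ne_zero.mpr (ne_of_gt hμpos)
  set B : ℝ := lam⁻¹ ^ 2 with hBdef
  have hBpos : (0:ℝ) < B := by rw [hBdef]; positivity
  set F : ℂ → ℂ := fun w => w ^ (μ:ℂ) / (μ:ℂ) + c with hFdef
  set F₁ : ℂ → ℂ := fun w => w ^ (γ:ℂ) with hF₁def
  set F₂ : ℂ → ℂ := fun w => (γ:ℂ) * w ^ ((γ:ℂ) - 1) with hF₂def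
  set N : ℂ → ℝ := fun w => w.re * w.re + w.im * w.im with hNdef
  set Φ : ℂ → ℝ := fun w => lam ^ 2 + B * N (F w) with hΦdef
  have hNeq : ∀ w : ℂ, N w = Complex.normSq w := fun w => (Complex.normSq_apply w).symm
  have hNpos : ∀ w : ℂ, w ≠ 0 → 0 < N w := fun w hw => by
    rw [hNeq]; exact Complex.normSq_pos.mpr hw
  have hΦpos : ∀ w : ℂ, 0 < Φ w := by
    intro w
    have h1 : 0 ≤ N (F w) := by rw [hNeq]; exact Complex.normSq_nonneg _
    have h2 : (0:ℝ) < lam ^ 2 := by positivity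
    have h3 : 0 ≤ B * N (F w) := mul_nonneg hBpos.le h1
    show 0 < lam ^ 2 + B * N (F w)
    linarith
  have huEq : u = fun w => γ * Real.log (N w) - 2 * Real.log (Φ w) := by
    funext w
    rw [hu w]
    have h1 : Real.log (N w) = 2 * Real.log ‖w‖ := by
      rw [hNeq w, ← Complex.sq_norm, Real.log_pow]
      norm_num
    have h2 : Φ w = lam ^ 2 + B * ‖w ^ (μ:ℂ) / (μ:ℂ) + c‖ ^ 2 := by
      show lam ^ 2 + B * N (F w) = _
      rw [hNeq, Complex.sq_norm]
    rw [h1, ← h2]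
    ring
  subst huEq
  have hγμ : (μ:ℂ) - 1 = (γ:ℂ) := by
    rw [hμ]; push_cast; ring
  have hFder : ∀ w ∈ Complex.slitPlane, HasDerivAt F (F₁ w) w := by
    intro w hw
    have h := ((Complex.hasStrictDerivAt_cpow_const (c := (μ:ℂ)) hw).hasDerivAt.div_const
      (μ:ℂ)).add_const c
    have e1 : (μ:ℂ) * w ^ ((μ:ℂ) - 1) / (μ:ℂ) = F₁ w := by
      rw [hγμ, mul_div_cancel_left₀ _ hμc]
    rw [← e1]
    exact h
  have hF₁der : ∀ w ∈ Complex.slitPlane, HasDerivAt F₁ (F₂ w) w := by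
    intro w hw
    exact (Complex.hasStrictDerivAt_cpow_const (c := (γ:ℂ)) hw).hasDerivAt
  set E : ℂ → ℂ → ℝ := fun v w =>
    γ * (2 * (w.re * v.re + w.im * v.im)) * (N w)⁻¹
      - 2 * (B * (2 * ((F w).re * (v * F₁ w).re + (F w).im * (v * F₁ w).im)) * (Φ w)⁻¹)
    with hEdef
  have key1 : ∀ w ∈ Complex.slitPlane, ∀ v : ℂ,
      fderiv ℝ (fun x => γ * Real.log (N x) - 2 * Real.log (Φ x)) w v = E v w := by
    intro w hw v
    have hw0 : w ≠ 0 := Complex.slitPlane_ne_zero hw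
    have hNw : N w ≠ 0 := (hNpos w hw0).ne'
    have hΦw : Φ w ≠ 0 := (hΦpos w).ne'
    have hre : HasFDerivAt (fun x : ℂ => x.re) Complex.reCLM w := Complex.reCLM.hasFDerivAt
    have him : HasFDerivAt (fun x : ℂ => x.im) Complex.imCLM w := Complex.imCLM.hasFDerivAt
    have hN : HasFDerivAt N _ w := (hre.mul hre).add (him.mul him)
    have hFres : HasFDerivAt F
        ((ContinuousLinearMap.smulRight (1 : ℂ →L[ℂ] ℂ) (F₁ w)).restrictScalars ℝ) w :=
      ((hFder w hw).hasFDerivAt).restrictScalars ℝ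
    have hreF : HasFDerivAt (fun x : ℂ => (F x).re) _ w :=
      Complex.reCLM.hasFDerivAt.comp w hFres
    have himF : HasFDerivAt (fun x : ℂ => (F x).im) _ w :=
      Complex.imCLM.hasFDerivAt.comp w hFres
    have hNF : HasFDerivAt (fun x : ℂ => N (F x)) _ w := (hreF.mul hreF).add (himF.mul himF)
    have hΦ : HasFDerivAt Φ _ w := (hNF.const_mul B).const_add (lam ^ 2)
    have hbig : HasFDerivAt (fun x => γ * Real.log (N x) - 2 * Real.log (Φ x)) _ w :=
      ((hN.log hNw).const_mul γ).sub ((hΦ.log hΦw).const_mul 2)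
    rw [hbig.fderiv]
    simp only [hEdef, ContinuousLinearMap.coe_sub', Pi.sub_apply, ContinuousLinearMap.coe_smul',
      Pi.smul_apply, ContinuousLinearMap.add_apply, ContinuousLinearMap.coe_comp',
      Function.comp_apply, ContinuousLinearMap.coe_restrictScalars',
      ContinuousLinearMap.smulRight_apply, ContinuousLinearMap.one_apply,
      Complex.reCLM_apply, Complex.imCLM_apply, smul_eq_mul]
    ring
  have key2 : ∀ z ∈ Complex.slitPlane, ∀ v : ℂ,
      fderiv ℝ (fun w => E v w) z v =
        γ * (2 * (v.re * v.re + v.im * v.im)) * (N z)⁻¹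
          - γ * (2 * (z.re * v.re + z.im * v.im)) * (2 * (z.re * v.re + z.im * v.im))
              * ((N z) ^ 2)⁻¹
          - 2 * (B * (2 * ((v * F₁ z).re * (v * F₁ z).re + (v * F₁ z).im * (v * F₁ z).im
              + ((F z).re * (v * (v * F₂ z)).re + (F z).im * (v * (v * F₂ z)).im)))
              * (Φ z)⁻¹)
          + 2 * (B * (2 * ((F z).re * (v * F₁ z).re + (F z).im * (v * F₁ z).im))
              * (B * (2 * ((F z).re * (v * F₁ z).re + (F z).im * (v * F₁ z).im)))
              * ((Φ z) ^ 2)⁻¹) := by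
    intro z hz v
    have hz0 : z ≠ 0 := Complex.slitPlane_ne_zero hz
    have hNz : N z ≠ 0 := (hNpos z hz0).ne'
    have hΦz : Φ z ≠ 0 := (hΦpos z).ne'
    have hre : HasFDerivAt (fun x : ℂ => x.re) Complex.reCLM z := Complex.reCLM.hasFDerivAt
    have him : HasFDerivAt (fun x : ℂ => x.im) Complex.imCLM z := Complex.imCLM.hasFDerivAt
    have hN : HasFDerivAt N _ z := (hre.mul hre).add (him.mul him)
    have hNinv : HasFDerivAt (fun x : ℂ => (N x)⁻¹) _ z :=
      (hasDerivAt_inv hNz).comp_hasFDerivAt z hN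
    have hA : HasFDerivAt (fun x : ℂ => x.re * v.re + x.im * v.im) _ z :=
      (hre.mul_const v.re).add (him.mul_const v.im)
    have hnum1 : HasFDerivAt (fun x : ℂ => γ * (2 * (x.re * v.re + x.im * v.im))) _ z :=
      (hA.const_mul 2).const_mul γ
    have hterm1 : HasFDerivAt
        (fun x : ℂ => γ * (2 * (x.re * v.re + x.im * v.im)) * (N x)⁻¹) _ z :=
      hnum1.mul hNinv
    have hFres : HasFDerivAt F
        ((ContinuousLinearMap.smulRight (1 : ℂ →L[ℂ] ℂ) (F₁ z)).restrictScalars ℝ) z :=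
      ((hFder z hz).hasFDerivAt).restrictScalars ℝ
    have hF₁res : HasFDerivAt F₁
        ((ContinuousLinearMap.smulRight (1 : ℂ →L[ℂ] ℂ) (F₂ z)).restrictScalars ℝ) z :=
      ((hF₁der z hz).hasFDerivAt).restrictScalars ℝ
    have hreF : HasFDerivAt (fun x : ℂ => (F x).re) _ z :=
      Complex.reCLM.hasFDerivAt.comp z hFres
    have himF : HasFDerivAt (fun x : ℂ => (F x).im) _ z :=
      Complex.imCLM.hasFDerivAt.comp z hFres
    have hvF₁ : HasFDerivAt (fun x : ℂ => v * F₁ x) _ z := hF₁res.const_mul v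
    have hvF₁re : HasFDerivAt (fun x : ℂ => (v * F₁ x).re) _ z :=
      Complex.reCLM.hasFDerivAt.comp z hvF₁
    have hvF₁im : HasFDerivAt (fun x : ℂ => (v * F₁ x).im) _ z :=
      Complex.imCLM.hasFDerivAt.comp z hvF₁
    have hP : HasFDerivAt
        (fun x : ℂ => (F x).re * (v * F₁ x).re + (F x).im * (v * F₁ x).im) _ z :=
      (hreF.mul hvF₁re).add (himF.mul hvF₁im)
    have hnum2 : HasFDerivAt (fun x : ℂ =>
        B * (2 * ((F x).re * (v * F₁ x).re + (F x).im * (v * F₁ x).im))) _ z :=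
      (hP.const_mul 2).const_mul B
    have hNF : HasFDerivAt (fun x : ℂ => N (F x)) _ z := (hreF.mul hreF).add (himF.mul himF)
    have hΦ : HasFDerivAt Φ _ z := (hNF.const_mul B).const_add (lam ^ 2)
    have hΦinv : HasFDerivAt (fun x : ℂ => (Φ x)⁻¹) _ z :=
      (hasDerivAt_inv hΦz).comp_hasFDerivAt z hΦ
    have hterm2 : HasFDerivAt (fun x : ℂ =>
        B * (2 * ((F x).re * (v * F₁ x).re + (F x).im * (v * F₁ x).im)) * (Φ x)⁻¹) _ z :=
      hnum2.mul hΦinv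
    have hbig2 : HasFDerivAt (fun w => E v w) _ z := hterm1.sub (hterm2.const_mul 2)
    rw [hbig2.fderiv]
    simp only [ContinuousLinearMap.coe_sub', Pi.sub_apply, ContinuousLinearMap.coe_smul',
      Pi.smul_apply, ContinuousLinearMap.add_apply, ContinuousLinearMap.coe_comp',
      Function.comp_apply, ContinuousLinearMap.coe_restrictScalars',
      ContinuousLinearMap.smulRight_apply, ContinuousLinearMap.one_apply,
      Complex.reCLM_apply, Complex.imCLM_apply, smul_eq_mul]
    ring
  constructor
  · -- smoothness
    intro w hw
    have hw0 : w ≠ 0 := Complex.slitPlane_ne_zero hw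
    have hFan : AnalyticAt ℂ F w := by
      show AnalyticAt ℂ (fun x : ℂ => x ^ (μ:ℂ) / (μ:ℂ) + c) w
      exact ((analyticAt_id.cpow analyticAt_const hw).div analyticAt_const
        hμc).add analyticAt_const
    have hFc : ContDiffAt ℝ (⊤:ℕ∞) F w := (hFan.contDiffAt).restrict_scalars ℝ
    have hrec : ContDiffAt ℝ (⊤:ℕ∞) (fun x : ℂ => x.re) w :=
      Complex.reCLM.contDiff.contDiffAt
    have himc : ContDiffAt ℝ (⊤:ℕ∞) (fun x : ℂ => x.im) w :=
      Complex.imCLM.contDiff.contDiffAt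
    have hNc : ContDiffAt ℝ (⊤:ℕ∞) N w := (hrec.mul hrec).add (himc.mul himc)
    have hreF : ContDiffAt ℝ (⊤:ℕ∞) (fun x : ℂ => (F x).re) w :=
      (Complex.reCLM.contDiff.contDiffAt).comp w hFc
    have himF : ContDiffAt ℝ (⊤:ℕ∞) (fun x : ℂ => (F x).im) w :=
      (Complex.imCLM.contDiff.contDiffAt).comp w hFc
    have hNFc : ContDiffAt ℝ (⊤:ℕ∞) (fun x : ℂ => N (F x)) w :=
      (hreF.mul hreF).add (himF.mul himF)
    have hΦc : ContDiffAt ℝ (⊤:ℕ∞) Φ w := contDiffAt_const.add (contDiffAt_const.mul hNFc)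
    have hlogN : ContDiffAt ℝ (⊤:ℕ∞) (fun x : ℂ => Real.log (N x)) w :=
      (Real.contDiffAt_log.mpr (hNpos w hw0).ne').comp w hNc
    have hlogΦ : ContDiffAt ℝ (⊤:ℕ∞) (fun x : ℂ => Real.log (Φ x)) w :=
      (Real.contDiffAt_log.mpr (hΦpos w).ne').comp w hΦc
    exact ((contDiffAt_const.mul hlogN).sub (contDiffAt_const.mul hlogΦ)).contDiffWithinAt
  · intro z hz
    have hz0 : z ≠ 0 := Complex.slitPlane_ne_zero hz
    have hNz : N z ≠ 0 := (hNpos z hz0).ne'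
    have hΦz : Φ z ≠ 0 := (hΦpos z).ne'
    have hmem : Complex.slitPlane ∈ 𝓝 z := Complex.isOpen_slitPlane.mem_nhds hz
    have h1 : (fun w => fderiv ℝ (fun x => γ * Real.log (N x) - 2 * Real.log (Φ x)) w 1)
        =ᶠ[𝓝 z] (fun w => E 1 w) :=
      eventuallyEq_of_mem hmem fun w hw => key1 w hw 1
    have hI : (fun w => fderiv ℝ (fun x => γ * Real.log (N x) - 2 * Real.log (Φ x)) w
        Complex.I) =ᶠ[𝓝 z] (fun w => E Complex.I w) :=
      eventuallyEq_of_mem hmem fun w hw => key1 w hw Complex.I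
    have hlap : lap (fun w => γ * Real.log (N w) - 2 * Real.log (Φ w)) z
        = fderiv ℝ (fun w => E 1 w) z 1 + fderiv ℝ (fun w => E Complex.I w) z Complex.I := by
      unfold lap
      rw [h1.fderiv_eq, hI.fderiv_eq]
    have hexp : Real.exp (γ * Real.log (N z) - 2 * Real.log (Φ z))
        = (N (F₁ z)) * ((Φ z) ^ 2)⁻¹ := by
      have e1 : Real.exp (γ * Real.log (N z)) = N z ^ γ := by
        rw [Real.rpow_def_of_pos (hNpos z hz0), mul_comm]
      have e2 : Real.exp (2 * Real.log (Φ z)) = Φ z ^ 2 := by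
        rw [two_mul, Real.exp_add, Real.exp_log (hΦpos z), pow_two]
      have e3 : N z ^ γ = N (F₁ z) := by
        have h4 : ‖z ^ (γ:ℂ)‖ = ‖z‖ ^ γ := by
          rw [Complex.norm_cpow_of_ne_zero hz0]
          simp
        have h5 : N (F₁ z) = (‖z‖ ^ γ) ^ (2:ℕ) := by
          rw [hNeq, show F₁ z = z ^ (γ:ℂ) from rfl, ← Complex.sq_norm, h4]
        have h6 : N z = ‖z‖ ^ (2:ℕ) := by rw [hNeq, ← Complex.sq_norm]
        rw [h5, h6, ← Real.rpow_natCast ‖z‖ 2,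
          ← Real.rpow_natCast (‖z‖ ^ γ) 2,
          ← Real.rpow_mul (norm_nonneg z), ← Real.rpow_mul (norm_nonneg z),
          mul_comm]
      rw [Real.exp_sub, e1, e2, e3, div_eq_mul_inv]
    show lap (fun w => γ * Real.log (N w) - 2 * Real.log (Φ w)) z
        + 8 * Real.exp (γ * Real.log (N z) - 2 * Real.log (Φ z)) = 0
    rw [hlap, key2 z hz 1, key2 z hz Complex.I, hexp]
    have hB0 : B ≠ 0 := hBpos.ne'
    have hlamB : lam ^ 2 = B⁻¹ := by rw [hBdef, inv_pow, inv_inv]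
    have h1 : N z = z.re * z.re + z.im * z.im := rfl
    have h2 : Φ z = B⁻¹ + B * ((F z).re * (F z).re + (F z).im * (F z).im) := by
      rw [show Φ z = lam ^ 2 + B * N (F z) from rfl, hlamB]
    have h3 : N z * (N z)⁻¹ = 1 := mul_inv_cancel₀ hNz
    have h4 : Φ z * (Φ z)⁻¹ = 1 := mul_inv_cancel₀ hΦz
    have h5 : B * B⁻¹ = 1 := mul_inv_cancel₀ hB0
    have h6 : N (F₁ z) = (F₁ z).re * (F₁ z).re + (F₁ z).im * (F₁ z).im := rfl
    simp only [Complex.one_re, Complex.one_im, Complex.I_re, Complex.I_im,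
      Complex.mul_re, Complex.mul_im, one_mul, mul_one, mul_zero, zero_mul, zero_sub,
      sub_zero, zero_add, add_zero, neg_neg, neg_mul, mul_neg]
    simp only [← inv_pow]
    linear_combination
      (4 * γ * (N z)⁻¹ * (N z)⁻¹) * h1
      - (4 * γ * (N z)⁻¹) * h3
      + (8 * B * ((F₁ z).re * (F₁ z).re + (F₁ z).im * (F₁ z).im) * (Φ z)⁻¹) * h4
      - (8 * B * ((F₁ z).re * (F₁ z).re + (F₁ z).im * (F₁ z).im) * (Φ z)⁻¹ * (Φ z)⁻¹) * h2
      - (8 * ((F₁ z).re * (F₁ z).re + (F₁ z).im * (F₁ z).im) * (Φ z)⁻¹ * (Φ z)⁻¹) * h5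
      + (8 * (Φ z)⁻¹ * (Φ z)⁻¹) * h6
end

section
/- Let γ > −1, μ = γ + 1, λ > 0 and c ∈ ℂ, and let u(z) = 2γ log|z| − 2 log( λ² + λ^{−2} | z^{μ}/μ + c |² ) on ℂ∖ℝ_{≤0} (principal power z^{μ}). Then u(z) + 2(γ + 2) log|z| converges to 4 log( λ (γ+1) ) as |z| → ∞ with z ∈ ℂ∖ℝ_{≤0}; in particular u(z) = −2(2+γ) log|z| + O(1) as z → ∞. -/
open Complex Filter

/-- For `γ > −1`, `μ = γ + 1`, `λ > 0`, `c ∈ ℂ`, the solution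
`u(z) = 2γ log|z| − 2 log(λ² + λ^{−2}|z^μ/μ + c|²)` of the singular Liouville equation
satisfies `u(z) + 2(γ+2) log|z| → 4 log(λ(γ+1))` as `|z| → ∞` within `ℂ∖ℝ_{≤0}`;
in particular `u(z) = −2(2+γ) log|z| + O(1)` at infinity. -/
theorem liouville_asymptotics (γ : ℝ) (hγ : -1 < γ) (μ : ℝ) (hμ : μ = γ + 1)
    (lam : ℝ) (hlam : 0 < lam) (c : ℂ) (u : ℂ → ℝ)
    (hu : ∀ z : ℂ, u z = 2 * γ * Real.log ‖z‖ -
      2 * Real.log (lam ^ 2 + lam⁻¹ ^ 2 * ‖z ^ ((μ : ℝ) : ℂ) / (μ : ℂ) + c‖ ^ 2)) :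
    Tendsto (fun z : ℂ => u z + 2 * (γ + 2) * Real.log ‖z‖)
      (Filter.comap (fun z : ℂ => ‖z‖) Filter.atTop ⊓ Filter.principal Complex.slitPlane)
      (nhds (4 * Real.log (lam * (γ + 1)))) := by
  have hμ0 : 0 < μ := by rw [hμ]; linarith
  set l := Filter.comap (fun z : ℂ => ‖z‖) Filter.atTop ⊓ Filter.principal Complex.slitPlane with hl
  have habs : Tendsto (fun z : ℂ => ‖z‖) l atTop :=
    tendsto_comap.mono_left inf_le_left
  have hA : Tendsto (fun z : ℂ => ‖z‖ ^ μ) l atTop :=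
    (tendsto_rpow_atTop hμ0).comp habs
  have hne : ∀ᶠ z : ℂ in l, z ≠ 0 := by
    filter_upwards [habs.eventually_ge_atTop 1] with z hz hz0
    rw [hz0] at hz; simp at hz; linarith
  have hCdiv : Tendsto (fun z : ℂ => c / z ^ ((μ : ℝ) : ℂ)) l (nhds 0) := by
    rw [tendsto_zero_iff_norm_tendsto_zero]
    have h1 : Tendsto (fun z : ℂ => ‖c‖ * (‖z‖ ^ μ)⁻¹) l
        (nhds (‖c‖ * 0)) := tendsto_const_nhds.mul hA.inv_tendsto_atTop
    rw [mul_zero] at h1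
    refine h1.congr fun z => ?_
    simp [norm_div, Complex.norm_cpow_real, div_eq_mul_inv]
  have hB : Tendsto (fun z : ℂ => ‖(μ : ℂ)⁻¹ + c / z ^ ((μ : ℝ) : ℂ)‖) l
      (nhds μ⁻¹) := by
    have h1 : Tendsto (fun z : ℂ => (μ : ℂ)⁻¹ + c / z ^ ((μ : ℝ) : ℂ)) l
        (nhds ((μ : ℂ)⁻¹ + 0)) := tendsto_const_nhds.add hCdiv
    rw [add_zero] at h1
    have h2 := (continuous_norm.tendsto _).comp h1
    simpa [Function.comp_def, abs_of_pos hμ0] using h2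
  set F : ℂ → ℝ := fun z =>
    lam ^ 2 * ((‖z‖ ^ μ)⁻¹) ^ 2 +
      lam⁻¹ ^ 2 * (‖z ^ ((μ : ℝ) : ℂ) / (μ : ℂ) + c‖ * (‖z‖ ^ μ)⁻¹) ^ 2
    with hF
  have t1 : Tendsto (fun z : ℂ => lam ^ 2 * ((‖z‖ ^ μ)⁻¹) ^ 2) l (nhds 0) := by
    have := (tendsto_const_nhds (x := lam ^ 2)).mul
      ((hA.inv_tendsto_atTop).pow 2)
    simpa using this
  have t2 : Tendsto (fun z : ℂ =>
      lam⁻¹ ^ 2 * (‖z ^ ((μ : ℝ) : ℂ) / (μ : ℂ) + c‖ * (‖z‖ ^ μ)⁻¹) ^ 2) l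
      (nhds (lam⁻¹ ^ 2 * (μ⁻¹) ^ 2)) := by
    have key : ∀ᶠ z : ℂ in l,
        ‖(μ : ℂ)⁻¹ + c / z ^ ((μ : ℝ) : ℂ)‖ =
          ‖z ^ ((μ : ℝ) : ℂ) / (μ : ℂ) + c‖ * (‖z‖ ^ μ)⁻¹ := by
      filter_upwards [hne] with z hz
      have hz' : z ^ ((μ : ℝ) : ℂ) ≠ 0 :=
        fun h => hz ((Complex.cpow_eq_zero_iff _ _).mp h).1
      have hμc : (μ : ℂ) ≠ 0 := by
        exact_mod_cast Complex.ofReal_ne_zero.mpr hμ0.ne'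
      have : (μ : ℂ)⁻¹ + c / z ^ ((μ : ℝ) : ℂ) =
          (z ^ ((μ : ℝ) : ℂ) / (μ : ℂ) + c) / z ^ ((μ : ℝ) : ℂ) := by
        field_simp
      rw [this, norm_div, Complex.norm_cpow_real, div_eq_mul_inv]
    exact (tendsto_const_nhds.mul (hB.pow 2)).congr' (key.mono fun z hz => by rw [hz])
  have hFt : Tendsto F l (nhds (lam⁻¹ ^ 2 * (μ⁻¹) ^ 2)) := by
    have h := t1.add t2
    rw [zero_add] at h
    exact h
  have hpos : (0 : ℝ) < lam⁻¹ ^ 2 * (μ⁻¹) ^ 2 := by positivity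
  have hlog : Tendsto (fun z : ℂ => -2 * Real.log (F z)) l
      (nhds (-2 * Real.log (lam⁻¹ ^ 2 * (μ⁻¹) ^ 2))) :=
    (((Real.continuousAt_log hpos.ne').tendsto.comp hFt).const_mul (-2))
  have hval : -2 * Real.log (lam⁻¹ ^ 2 * (μ⁻¹) ^ 2) = 4 * Real.log (lam * (γ + 1)) := by
    rw [← hμ, Real.log_mul (pow_ne_zero 2 (inv_ne_zero hlam.ne')) (pow_ne_zero 2 (inv_ne_zero hμ0.ne')),
      Real.log_pow, Real.log_pow, Real.log_inv, Real.log_inv,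
      Real.log_mul hlam.ne' hμ0.ne']
    push_cast; ring
  rw [← hval]
  refine hlog.congr' ?_
  filter_upwards [hne] with z hz
  have hzpos : 0 < ‖z‖ := norm_pos_iff.mpr hz
  have hApos : 0 < ‖z‖ ^ μ := Real.rpow_pos_of_pos hzpos μ
  set X := ‖z ^ ((μ : ℝ) : ℂ) / (μ : ℂ) + c‖ with hX
  have hFz : F z = (lam ^ 2 + lam⁻¹ ^ 2 * X ^ 2) * ((‖z‖ ^ μ)⁻¹) ^ 2 := by
    rw [hF]; ring
  have hsum : 0 < lam ^ 2 + lam⁻¹ ^ 2 * X ^ 2 := by positivity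
  have hinv : 0 < ((‖z‖ ^ μ)⁻¹) ^ 2 := by positivity
  rw [hFz, Real.log_mul hsum.ne' hinv.ne', Real.log_pow, Real.log_inv,
    Real.log_rpow hzpos, hu z, ← hX, hμ]
  push_cast; ring
end

section
/- Let μ > 0 with μ ∉ ℤ and let c ∈ ℂ with c ≠ 0. Then there exists z ∈ ℂ∖ℝ_{≤0} such that | z^{μ}/μ + c | ≠ | z^{μ}/μ + e^{−2πiμ} c |, where z^{μ} is the principal power. Consequently, for λ > 0 and γ = μ − 1, the two functions u_c(z) = 2γ log|z| − 2 log(λ² + λ^{−2}|z^{μ}/μ + c|²) and u_{c′}(z) with c′ = e^{−2πiμ} c do not coincide on ℂ∖ℝ_{≤0}. -/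
open Complex Filter

lemma key_abs_ne (w c E : ℂ) (hE : Complex.normSq E = 1)
    (h : (w * (starRingEnd ℂ) (c - E * c)).re ≠ 0) :
    ‖w + c‖ ≠ ‖w + E * c‖ := by
  intro heq
  apply h
  have h2 : Complex.normSq (w + c) = Complex.normSq (w + E * c) := by
    rw [← Complex.sq_norm, ← Complex.sq_norm, heq]
  rw [Complex.normSq_add, Complex.normSq_add, Complex.normSq_mul, hE, one_mul] at h2
  have h3 : (w * (starRingEnd ℂ) c).re = (w * (starRingEnd ℂ) (E * c)).re := by linarith
  rw [map_sub, mul_sub, Complex.sub_re]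
  linarith

/-- **monodromy.** For `μ > 0` non-integral and `c ≠ 0`, there is
`z ∈ ℂ∖ℝ_{≤0}` with `|z^μ/μ + c| ≠ |z^μ/μ + e^{−2πiμ}c|` (principal power `z^μ`);
consequently for any `λ > 0` and `γ = μ − 1` the solutions `u_c` and `u_{c′}`,
`c′ = e^{−2πiμ}c`, of the singular Liouville equation do not coincide on `ℂ∖ℝ_{≤0}`. -/
theorem liouville_monodromy (μ : ℝ) (hμpos : 0 < μ) (hμint : ∀ k : ℤ, (k : ℝ) ≠ μ)
    (c : ℂ) (hc : c ≠ 0) (lam : ℝ) (hlam : 0 < lam) (γ : ℝ) (hγ : γ = μ - 1)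
    (u : ℂ → ℂ → ℝ)
    (hu : ∀ c' : ℂ, ∀ z : ℂ, u c' z = 2 * γ * Real.log ‖z‖ -
      2 * Real.log (lam ^ 2 +
        lam⁻¹ ^ 2 * ‖z ^ ((μ : ℝ) : ℂ) / (μ : ℂ) + c'‖ ^ 2)) :
    (∃ z ∈ Complex.slitPlane,
      ‖z ^ ((μ : ℝ) : ℂ) / (μ : ℂ) + c‖ ≠
        ‖z ^ ((μ : ℝ) : ℂ) / (μ : ℂ) +
          Complex.exp (-2 * Real.pi * Complex.I * μ) * c‖) ∧
    ¬ (∀ z ∈ Complex.slitPlane,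
        u c z = u (Complex.exp (-2 * Real.pi * Complex.I * μ) * c) z) := by
  set E : ℂ := Complex.exp (-2 * Real.pi * Complex.I * μ) with hEdef
  have hμne : (μ : ℂ) ≠ 0 := Complex.ofReal_ne_zero.2 hμpos.ne'
  have hE1 : E ≠ 1 := by
    intro h
    rw [hEdef, Complex.exp_eq_one_iff] at h
    obtain ⟨n, hn⟩ := h
    have him := congrArg Complex.im hn
    simp [Complex.mul_im, Complex.mul_re] at him
    have hπ := Real.pi_pos
    have : μ = -n := by nlinarith
    exact hμint (-n) (by push_cast; linarith)
  have hEnormSq : Complex.normSq E = 1 := by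
    rw [← Complex.sq_norm, hEdef, Complex.norm_exp]
    simp [Complex.mul_re]
  have hd : c - E * c ≠ 0 := by
    intro h
    have h2 : (1 - E) * c = 0 := by linear_combination h
    rcases mul_eq_zero.1 h2 with h3 | h3
    · exact hE1 (by linear_combination -h3)
    · exact hc h3
  set d : ℂ := c - E * c with hddef
  have hmain : ∃ z ∈ Complex.slitPlane,
      ‖z ^ ((μ : ℝ) : ℂ) / (μ : ℂ) + c‖ ≠
        ‖z ^ ((μ : ℝ) : ℂ) / (μ : ℂ) + E * c‖ := by
    by_cases hre : d.re ≠ 0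
    · refine ⟨1, Complex.one_mem_slitPlane, ?_⟩
      rw [Complex.one_cpow]
      apply key_abs_ne _ _ _ hEnormSq
      have : ((1 : ℂ) / (μ : ℂ) * (starRingEnd ℂ) d).re = μ⁻¹ * d.re := by
        rw [one_div, ← Complex.ofReal_inv, Complex.re_ofReal_mul, Complex.conj_re]
      rw [← hddef, this]
      exact mul_ne_zero (inv_ne_zero hμpos.ne') hre
    · push_neg at hre
      have him : d.im ≠ 0 := by
        intro h
        exact hd (Complex.ext hre h)
      set θ : ℝ := min (Real.pi / 2) (Real.pi / (2 * μ)) with hθdef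
      have hθpos : 0 < θ := lt_min (by positivity) (by positivity)
      have hθle : θ ≤ Real.pi / 2 := min_le_left _ _
      have hμθpos : 0 < θ * μ := mul_pos hθpos hμpos
      have hμθle : θ * μ ≤ Real.pi / 2 := by
        have h1 : θ ≤ Real.pi / (2 * μ) := min_le_right _ _
        calc θ * μ ≤ Real.pi / (2 * μ) * μ := by nlinarith
          _ = Real.pi / 2 := by field_simp
      have hsin : 0 < Real.sin (θ * μ) :=
        Real.sin_pos_of_pos_of_lt_pi hμθpos (lt_of_le_of_lt hμθle (by linarith [Real.pi_pos]))
      refine ⟨Complex.exp (θ * Complex.I), ?_, ?_⟩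
      · rw [Complex.mem_slitPlane_iff]
        right
        rw [Complex.exp_ofReal_mul_I_im]
        exact (Real.sin_pos_of_pos_of_lt_pi hθpos (by linarith [Real.pi_pos])).ne'
      · have hz0 : Complex.exp (θ * Complex.I) ≠ 0 := Complex.exp_ne_zero _
        have hcpow : Complex.exp (θ * Complex.I) ^ ((μ : ℝ) : ℂ) =
            Complex.exp (((θ * μ : ℝ) : ℂ) * Complex.I) := by
          rw [Complex.cpow_def_of_ne_zero hz0, Complex.log_exp]
          · congr 1; push_cast; ring
          · simp [hθpos, Real.pi_pos]; linarith [Real.pi_pos]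
          · simp; linarith [Real.pi_pos]
        rw [hcpow]
        apply key_abs_ne _ _ _ hEnormSq
        rw [← hddef]
        have hre1 : (Complex.exp (((θ * μ : ℝ) : ℂ) * Complex.I) / (μ : ℂ) *
            (starRingEnd ℂ) d).re = μ⁻¹ * (Real.cos (θ * μ) * d.re + Real.sin (θ * μ) * d.im) := by
          have : Complex.exp (((θ * μ : ℝ) : ℂ) * Complex.I) / (μ : ℂ) =
              ((μ⁻¹ : ℝ) : ℂ) * Complex.exp (((θ * μ : ℝ) : ℂ) * Complex.I) := by
            rw [Complex.ofReal_inv]; field_simp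
          rw [this, mul_assoc, Complex.re_ofReal_mul, Complex.mul_re,
            Complex.exp_ofReal_mul_I_re, Complex.exp_ofReal_mul_I_im,
            Complex.conj_re, Complex.conj_im]
          ring
        rw [hre1, hre]
        have : μ⁻¹ * (Real.cos (θ * μ) * 0 + Real.sin (θ * μ) * d.im) =
            μ⁻¹ * (Real.sin (θ * μ) * d.im) := by ring
        rw [this]
        exact mul_ne_zero (inv_ne_zero hμpos.ne') (mul_ne_zero hsin.ne' him)
  refine ⟨hmain, ?_⟩
  intro hall
  obtain ⟨z, hz, hne⟩ := hmain
  have h := hall z hz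
  rw [hu, hu] at h
  set X := ‖z ^ ((μ : ℝ) : ℂ) / (μ : ℂ) + c‖ with hX
  set Y := ‖z ^ ((μ : ℝ) : ℂ) / (μ : ℂ) + E * c‖ with hY
  have hXpos : (0:ℝ) < lam ^ 2 + lam⁻¹ ^ 2 * X ^ 2 := by positivity
  have hYpos : (0:ℝ) < lam ^ 2 + lam⁻¹ ^ 2 * Y ^ 2 := by positivity
  have hlog : Real.log (lam ^ 2 + lam⁻¹ ^ 2 * X ^ 2) =
      Real.log (lam ^ 2 + lam⁻¹ ^ 2 * Y ^ 2) := by linarith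
  have heq : lam ^ 2 + lam⁻¹ ^ 2 * X ^ 2 = lam ^ 2 + lam⁻¹ ^ 2 * Y ^ 2 := by
    rw [← Real.exp_log hXpos, ← Real.exp_log hYpos, hlog]
  have hXnn : 0 ≤ X := norm_nonneg _
  have hYnn : 0 ≤ Y := norm_nonneg _
  have hsq : X ^ 2 = Y ^ 2 := by
    have hl : (0:ℝ) < lam⁻¹ ^ 2 := by positivity
    nlinarith
  have hXY : X = Y := by nlinarith
  exact hne hXY
end
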